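/- arXiv:1210.0616 — 12 statements merged into one kernel-verified Lean document; each statement's English description precedes it below -/
import Mathlib

section
/- Let X be a type and let S be a subset of X × X carrying an abelian group structure (S, +, 0) whose addition satisfies the complete-positivity condition: for all u, v ∈ S, the pair u + v (viewed in X × X) equals the swap of the pair v + u, i.e. if u + v = (e, f) then v + u = (f, e). Then every element of S has equal components: every (c, d) ∈ S satisfies c = d. -/
/-- If a subset `S ⊆ X × X` carries an abelian group structure whose addition is
completely positive, in the sense that `u + v` (viewed in `X × X`) is the swap of
`v + u`, then every element of `S` lies on the diagonal. -/
theorem stmt_0 {X : Type*} (S : Set (X × X)) [AddCommGroup S]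
    (hcp : ∀ u v : S, (↑(u + v) : X × X) = Prod.swap (↑(v + u) : X × X)) :
    ∀ c d : X, (c, d) ∈ S → c = d := by
  intro c d h
  have := hcp ⟨(c, d), h⟩ 0
  rw [add_zero, zero_add] at this
  exact (Prod.mk.injEq ..).mp this |>.1.symm ▸ rfl
end

section
/- The linear map δ : M₂(ℂ) → M₄(ℂ) determined by sending each normalized Pauli matrix to its Kronecker square, δ(αᵢ) = αᵢ ⊗ₖ αᵢ for i = 1,2,3,4, is not a positive map: the matrix A = √2·α₁ + α₂ + α₄ = [[1 + 1/√2, 1/√2], [1/√2, 1 − 1/√2]] is positive semidefinite, but its image δ(A) = √2·(α₁ ⊗ₖ α₁) + (α₂ ⊗ₖ α₂) + (α₄ ⊗ₖ α₄) is not positive semidefinite (it has the negative eigenvalue (√2 − 2)/2). -/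
open Matrix Kronecker ComplexOrder

noncomputable section

/-- The linear map `δ` on `M₂(ℂ)` sending each normalized Pauli matrix to its Kronecker
square is not a positive map: `A = √2·α₁ + α₂ + α₄` is positive semidefinite, but its
image `δ(A) = √2·(α₁ ⊗ₖ α₁) + (α₂ ⊗ₖ α₂) + (α₄ ⊗ₖ α₄)` is not. -/
theorem stmt_1
    (α₁ α₂ α₃ α₄ : Matrix (Fin 2) (Fin 2) ℂ)
    (h₁ : α₁ = ((Real.sqrt 2 : ℂ))⁻¹ • !![1, 0; 0, 1])
    (h₂ : α₂ = ((Real.sqrt 2 : ℂ))⁻¹ • !![0, 1; 1, 0])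
    (h₃ : α₃ = ((Real.sqrt 2 : ℂ))⁻¹ • !![0, -Complex.I; Complex.I, 0])
    (h₄ : α₄ = ((Real.sqrt 2 : ℂ))⁻¹ • !![1, 0; 0, -1])
    (δ : Matrix (Fin 2) (Fin 2) ℂ →ₗ[ℂ] Matrix (Fin 2 × Fin 2) (Fin 2 × Fin 2) ℂ)
    (hδ₁ : δ α₁ = α₁ ⊗ₖ α₁) (hδ₂ : δ α₂ = α₂ ⊗ₖ α₂)
    (hδ₃ : δ α₃ = α₃ ⊗ₖ α₃) (hδ₄ : δ α₄ = α₄ ⊗ₖ α₄) :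
    ((Real.sqrt 2 : ℂ) • α₁ + α₂ + α₄).PosSemidef ∧
      ¬ (δ ((Real.sqrt 2 : ℂ) • α₁ + α₂ + α₄)).PosSemidef := by
  set c : ℂ := ((Real.sqrt 2 : ℂ))⁻¹ with hc
  have hs : ((Real.sqrt 2 : ℝ) : ℂ) ≠ 0 := by
    simpa using (Real.sqrt_pos.mpr (by norm_num : (0:ℝ) < 2)).ne'
  have hsc : ((Real.sqrt 2 : ℝ) : ℂ) * c = 1 := by
    rw [hc]; field_simp
  have hc2 : c * c = 1 / 2 := by
    rw [hc, ← mul_inv]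
    norm_cast
    rw [Real.mul_self_sqrt (by norm_num)]
    norm_num
  have hA : (Real.sqrt 2 : ℂ) • α₁ + α₂ + α₄ = !![1 + c, c; c, 1 - c] := by
    subst h₁ h₂ h₄
    ext i j
    fin_cases i <;> fin_cases j <;>
      simp [Matrix.smul_apply, smul_smul, hsc] <;> ring
  constructor
  · rw [hA]
    have key : !![1 + c, c; c, 1 - c] =
        (c • !![1 + c, c; c, 1 - c])ᴴ * (c • !![1 + c, c; c, 1 - c]) := by
      have hcc : (starRingEnd ℂ) c = c := by
        rw [hc]; simp [Complex.conj_ofReal]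
      ext i j
      fin_cases i <;> fin_cases j <;>
        · simp [Matrix.mul_apply, Fin.sum_univ_succ, Matrix.smul_apply, hcc]
          first
          | linear_combination (-(2*c^2 + 2*c + 2)) * hc2
          | linear_combination (-2*c) * hc2
          | linear_combination (-(2*c^2 - 2*c + 2)) * hc2
          | ring
    rw [key]
    exact Matrix.posSemidef_conjTranspose_mul_self _
  · intro h
    have hδA : δ ((Real.sqrt 2 : ℂ) • α₁ + α₂ + α₄) =
        (Real.sqrt 2 : ℂ) • (α₁ ⊗ₖ α₁) + α₂ ⊗ₖ α₂ + α₄ ⊗ₖ α₄ := by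
      simp [map_add, _root_.map_smul, hδ₁, hδ₂, hδ₄]
    set x : Fin 2 × Fin 2 → ℂ := fun p => ![![0,1],![-1,0]] p.1 p.2 with hx
    have hq := h.dotProduct_mulVec_nonneg x
    rw [hδA] at hq
    have hval : dotProduct (star x)
        (((Real.sqrt 2 : ℂ) • (α₁ ⊗ₖ α₁) + α₂ ⊗ₖ α₂ + α₄ ⊗ₖ α₄) *ᵥ x)
        = ((Real.sqrt 2 : ℝ) : ℂ) - 2 := by
      subst h₁ h₂ h₄
      simp only [dotProduct, Matrix.mulVec, Fintype.sum_prod_type,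
        Fin.sum_univ_succ, Fin.sum_univ_zero, Matrix.add_apply, Matrix.smul_apply,
        Matrix.kroneckerMap_apply, hx, Pi.star_apply]
      simp [Matrix.smul_apply]
      ring_nf
      rw [show c^2 = c*c by ring, hc2]
      ring
    rw [hval] at hq
    rw [Complex.le_def] at hq
    have : (2:ℝ) ≤ Real.sqrt 2 := by simpa using hq.1
    have h4 : Real.sqrt 2 < 2 := by
      nlinarith [Real.sq_sqrt (by norm_num : (0:ℝ) ≤ 2), Real.sqrt_nonneg 2]
    linarith
end
end

section
/- Fix n ≥ 1, let (α i)_{i : Fin (n*n)} be an orthonormal basis of Mₙ(ℂ) for the Hilbert–Schmidt inner product, and let δ : Mₙ(ℂ) → M_{n·n}(ℂ) be the unique linear map with δ(α i) = (α i) ⊗ₖ (α i). Then δ is completely positive if and only if the matrix Δ, indexed by triples (j'', j', j) and (k'', k', k) in Fin n × Fin n × Fin n, with entries Δ_{(j'',j',j),(k'',k',k)} = ∑_i conj((α i)_{j k}) · (α i)_{j' k'} · (α i)_{j'' k''}, is positive semidefinite. -/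
open Matrix Kronecker ComplexOrder

noncomputable section

/-- The Hilbert-Schmidt inner product `⟨a, b⟩ = Tr(aᴴ b)` on square matrices. -/
def hsInner {m : Type*} [Fintype m] (a b : Matrix m m ℂ) : ℂ :=
  (aᴴ * b).trace

/-- The amplification `id ⊗ Φ` of a linear map `Φ` between matrix algebras,
acting blockwise on matrices indexed by `Fin k × p`. -/
def amplify {p q : Type*} [Fintype p] [Fintype q]
    (Φ : Matrix p p ℂ →ₗ[ℂ] Matrix q q ℂ) (k : ℕ)
    (M : Matrix (Fin k × p) (Fin k × p) ℂ) :
    Matrix (Fin k × q) (Fin k × q) ℂ :=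
  Matrix.of fun i j => Φ (Matrix.of fun a b => M (i.1, a) (j.1, b)) i.2 j.2

/-- A linear map between matrix algebras is completely positive if all its
amplifications send positive semidefinite matrices to positive semidefinite matrices. -/
def IsCompletelyPositive {p q : Type*} [Fintype p] [Fintype q]
    (Φ : Matrix p p ℂ →ₗ[ℂ] Matrix q q ℂ) : Prop :=
  ∀ (k : ℕ) (M : Matrix (Fin k × p) (Fin k × p) ℂ),
    M.PosSemidef → (amplify Φ k M).PosSemidef

lemma posSemidef_sum {ι m : Type*} [Fintype ι] [Fintype m]
    (f : ι → Matrix m m ℂ) (h : ∀ i, (f i).PosSemidef) : (∑ i, f i).PosSemidef := by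
  classical
  exact Finset.sum_induction f _ (fun a b ha hb => ha.add hb) Matrix.PosSemidef.zero
    (fun i _ => h i)

/-- Choi-type characterization: `δ` (the map `α i ↦ α i ⊗ₖ α i` on an orthonormal
basis of `Mₙ(ℂ)`) is completely positive iff the matrix `Δ` is positive semidefinite. -/
theorem stmt_2 (n : ℕ) (hn : 1 ≤ n)
    (α : Fin (n * n) → Matrix (Fin n) (Fin n) ℂ)
    (horth : ∀ i j, hsInner (α i) (α j) = if i = j then 1 else 0)
    (hspan : Submodule.span ℂ (Set.range α) = ⊤)
    (δ : Matrix (Fin n) (Fin n) ℂ →ₗ[ℂ] Matrix (Fin n × Fin n) (Fin n × Fin n) ℂ)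
    (hδ : ∀ i, δ (α i) = α i ⊗ₖ α i) :
    IsCompletelyPositive δ ↔
      (Matrix.of fun (j k : Fin n × Fin n × Fin n) =>
        ∑ i, (starRingEnd ℂ) (α i j.2.2 k.2.2) * α i j.2.1 k.2.1 * α i j.1 k.1).PosSemidef := by
  classical
  set D : Matrix (Fin n × Fin n × Fin n) (Fin n × Fin n × Fin n) ℂ :=
    Matrix.of fun p q => ∑ i, (starRingEnd ℂ) (α i p.1 q.1) * α i p.2.1 q.2.1 * α i p.2.2 q.2.2
    with hDdef
  let F : Fin (n * n) → (Matrix (Fin n) (Fin n) ℂ →ₗ[ℂ] ℂ) := fun i =>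
    { toFun := fun A => ∑ j, ∑ k, (starRingEnd ℂ) (α i j k) * A j k
      map_add' := by
        intro A B
        simp [Matrix.add_apply, mul_add, Finset.sum_add_distrib]
      map_smul' := by
        intro c A
        simp only [Matrix.smul_apply, smul_eq_mul, RingHom.id_apply, Finset.mul_sum]
        exact Finset.sum_congr rfl fun _ _ => Finset.sum_congr rfl fun _ _ => by ring }
  have hF : ∀ i j, F i (α j) = if i = j then 1 else 0 := by
    intro i j
    rw [← horth i j]
    simp only [F, LinearMap.coe_mk, AddHom.coe_mk, hsInner, Matrix.trace, Matrix.diag,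
      Matrix.mul_apply, Matrix.conjTranspose_apply]
    rw [Finset.sum_comm]
    rfl
  have hδT : δ = ∑ i, (F i).smulRight (α i ⊗ₖ α i) := by
    refine LinearMap.ext_on_range hspan fun j => ?_
    simp only [LinearMap.sum_apply, LinearMap.smulRight_apply, hF, hδ, ite_smul, one_smul,
      zero_smul, Finset.sum_ite_eq, Finset.sum_ite_eq', Finset.mem_univ, if_true]
  have hkey : ∀ (A : Matrix (Fin n) (Fin n) ℂ) (s t : Fin n × Fin n),
      δ A s t = ∑ j, ∑ k, A j k * D (j, s.1, s.2) (k, t.1, t.2) := by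
    intro A s t
    rw [hδT]
    simp only [LinearMap.sum_apply, LinearMap.smulRight_apply, Matrix.sum_apply,
      Matrix.smul_apply, smul_eq_mul, kroneckerMap_apply, LinearMap.coe_mk, AddHom.coe_mk,
      hDdef, Matrix.of_apply, F]
    simp only [Finset.sum_mul, Finset.mul_sum]
    rw [Finset.sum_comm]
    refine Finset.sum_congr rfl fun j _ => ?_
    rw [Finset.sum_comm]
    exact Finset.sum_congr rfl fun k _ => Finset.sum_congr rfl fun i _ => by ring
  have main : IsCompletelyPositive δ ↔ D.PosSemidef := by
    constructor
    · intro h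
      set w : Matrix (Fin n × Fin n) Unit ℂ :=
        Matrix.of fun p _ => if p.1 = p.2 then (1 : ℂ) else 0 with hw
      have hamp : amplify δ n (w * wᴴ) = D := by
        ext ⟨a, s1, s2⟩ ⟨b, t1, t2⟩
        show δ (Matrix.of fun p q => (w * wᴴ) (a, p) (b, q)) (s1, s2) (t1, t2) = _
        rw [hkey]
        simp only [Matrix.of_apply, Matrix.mul_apply, Matrix.conjTranspose_apply, hw,
          Finset.univ_unique, Finset.sum_const, Finset.card_singleton, one_smul]
        simp [apply_ite, ite_mul, mul_ite, Finset.sum_ite_eq, Finset.sum_ite_eq']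
      rw [← hamp]
      exact h n (w * wᴴ) (Matrix.posSemidef_self_mul_conjTranspose w)
    · intro hD k M hM
      set R := (open scoped MatrixOrder in CFC.sqrt D) with hR
      have hRH : R.IsHermitian := (open scoped MatrixOrder in (Matrix.nonneg_iff_posSemidef.mp (CFC.sqrt_nonneg D)).1)
      have hDentry : ∀ p q, D p q = ∑ r, R p r * star (R q r) := by
        intro p q
        conv_lhs => rw [← (open scoped MatrixOrder in CFC.sqrt_mul_sqrt_self D (Matrix.nonneg_iff_posSemidef.mpr hD))]
        rw [Matrix.mul_apply]
        exact Finset.sum_congr rfl fun r _ => by rw [hRH.apply]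
      set B : (Fin n × Fin n × Fin n) → Matrix (Fin k × Fin n) (Fin k × (Fin n × Fin n)) ℂ :=
        fun r => Matrix.of fun u v =>
          if u.1 = v.1 then star (R (u.2, v.2) r) else 0 with hB
      have hampM : amplify δ k M = ∑ r, (B r)ᴴ * M * (B r) := by
        ext ⟨a, s⟩ ⟨b, t⟩
        show δ (Matrix.of fun p q => M (a, p) (b, q)) s t = _
        rw [hkey, Matrix.sum_apply]
        have hterm : ∀ r, ((B r)ᴴ * M * (B r)) (a, s) (b, t) =
            ∑ k', ∑ j', R (j', s.1, s.2) r * M (a, j') (b, k') * star (R (k', t.1, t.2) r) := by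
          intro r
          simp only [Matrix.mul_apply, Matrix.conjTranspose_apply, hB, Matrix.of_apply,
            Fintype.sum_prod_type, apply_ite (star : ℂ → ℂ), star_star, star_zero, ite_mul,
            zero_mul, mul_ite, mul_zero, Finset.sum_mul, Finset.mul_sum]
          conv_lhs => rw [Finset.sum_comm]
          simp only [Finset.sum_ite_eq', Finset.mem_univ, if_true]
          refine Finset.sum_congr rfl fun x1 _ => ?_
          conv_lhs => rw [Finset.sum_comm]
          simp only [Finset.sum_ite_eq', Finset.mem_univ, if_true]
        simp only [hterm]
        rw [Finset.sum_comm]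
        conv_rhs => rw [Finset.sum_comm]
        refine Finset.sum_congr rfl fun k' _ => ?_
        simp only [hDentry, Finset.mul_sum]
        rw [Finset.sum_comm]
        exact Finset.sum_congr rfl fun r _ => Finset.sum_congr rfl fun j' _ => by
          simp only [Matrix.of_apply]; ring
      rw [hampM]
      exact posSemidef_sum _ fun r => hM.conjTranspose_mul_mul_same (B r)
  have hsub : (Matrix.of fun (j k : Fin n × Fin n × Fin n) =>
      ∑ i, (starRingEnd ℂ) (α i j.2.2 k.2.2) * α i j.2.1 k.2.1 * α i j.1 k.1)
      = D.submatrix (fun p => (p.2.2, p.2.1, p.1)) (fun p => (p.2.2, p.2.1, p.1)) := by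
    ext p q
    simp [hDdef, Matrix.submatrix_apply]
  rw [main, hsub]
  constructor
  · intro h
    exact h.submatrix _
  · intro h
    have h2 := h.submatrix (fun p : Fin n × Fin n × Fin n => (p.2.2, p.2.1, p.1))
    rwa [Matrix.submatrix_submatrix,
      show ((fun p : Fin n × Fin n × Fin n => (p.2.2, p.2.1, p.1)) ∘
        fun p : Fin n × Fin n × Fin n => (p.2.2, p.2.1, p.1)) = id from funext fun p => rfl,
      Matrix.submatrix_id_id] at h2
end
end

section
/- Fix n ≥ 1, let (α i)_{i : Fin (n*n)} be an orthonormal basis of Mₙ(ℂ) for the Hilbert–Schmidt inner product, and let δ : Mₙ(ℂ) → M_{n·n}(ℂ) be the unique linear map with δ(α i) = (α i) ⊗ₖ (α i). If δ is completely positive, then the set of basis elements is closed under conjugate transpose: {α i : i} = {(α i)ᴴ : i} as sets of matrices. -/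
open Matrix Kronecker ComplexOrder

noncomputable section

/-- `hsInner a` as a linear map in the second argument. -/
def hsInnerL {m : Type*} [Fintype m] (a : Matrix m m ℂ) : Matrix m m ℂ →ₗ[ℂ] ℂ where
  toFun b := hsInner a b
  map_add' x y := by simp [hsInner, Matrix.mul_add]
  map_smul' c x := by simp [hsInner, Matrix.mul_smul]

lemma hsInnerL_apply {m : Type*} [Fintype m] (a b : Matrix m m ℂ) :
    hsInnerL a b = hsInner a b := rfl

lemma conjT_kron {m m' : Type*} [Fintype m] [Fintype m']
    (A : Matrix m m ℂ) (B : Matrix m' m' ℂ) : (A ⊗ₖ B)ᴴ = Aᴴ ⊗ₖ Bᴴ := by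
  ext ⟨i, k⟩ ⟨j, l⟩
  simp [conjTranspose_apply, star_mul', mul_comm]

lemma hsInner_kron {m m' : Type*} [Fintype m] [Fintype m']
    (a b : Matrix m m ℂ) (c d : Matrix m' m' ℂ) :
    hsInner (a ⊗ₖ c) (b ⊗ₖ d) = hsInner a b * hsInner c d := by
  rw [hsInner, conjT_kron, ← mul_kronecker_mul, trace_kronecker, hsInner, hsInner]

lemma kron_sum_sum {I : Type*} [Fintype I] {m m' : Type*} [Fintype m] [Fintype m']
    (f : I → Matrix m m ℂ) (g : I → Matrix m' m' ℂ) :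
    (∑ j, f j) ⊗ₖ (∑ k, g k) = ∑ j, ∑ k, f j ⊗ₖ g k := by
  ext ⟨p, q⟩ ⟨r, s⟩
  simp only [Matrix.sum_apply, kroneckerMap_apply]
  rw [Finset.sum_mul_sum]

/-- Completely positive maps are hermiticity preserving. -/
lemma herm_of_CP {n : ℕ}
    (δ : Matrix (Fin n) (Fin n) ℂ →ₗ[ℂ] Matrix (Fin n × Fin n) (Fin n × Fin n) ℂ)
    (hCP : IsCompletelyPositive δ) (a : Matrix (Fin n) (Fin n) ℂ) :
    δ aᴴ = (δ a)ᴴ := by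
  classical
  -- the maximally entangled vector and its rank-one projection
  set v : Fin n × Fin n → ℂ := fun p => if p.1 = p.2 then 1 else 0 with hv
  set M : Matrix (Fin n × Fin n) (Fin n × Fin n) ℂ :=
    Matrix.of fun p q => v p * star (v q) with hM
  have hMps : M.PosSemidef := by
    refine posSemidef_iff_dotProduct_mulVec.mpr ⟨?_, ?_⟩
    · ext p q
      simp [hM, conjTranspose_apply, mul_comm]
    · intro x
      have key : ∀ p q, star (x p) * (M p q * x q) = (star (x p) * v p) * (star (v q) * x q) := by
        intro p q
        show star (x p) * ((v p * star (v q)) * x q) = _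
        ring
      have h1 : star x ⬝ᵥ M *ᵥ x = (∑ p, star (x p) * v p) * (∑ q, star (v q) * x q) := by
        rw [Finset.sum_mul_sum]
        simp only [dotProduct, mulVec, Finset.mul_sum]
        exact Finset.sum_congr rfl fun p _ => Finset.sum_congr rfl fun q _ => key p q
      have h2 : (∑ p, star (x p) * v p) = star (∑ q, star (v q) * x q) := by
        rw [star_sum]
        exact Finset.sum_congr rfl fun q _ => by rw [star_mul', star_star, mul_comm]
      rw [h1, h2]
      exact star_mul_self_nonneg _
  have hC := (hCP n M hMps).isHermitian
  -- hermiticity of the Choi matrix gives the result on the standard basis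
  have hblock : ∀ i j : Fin n,
      (Matrix.of fun a b => M (i, a) (j, b)) = single i j (1 : ℂ) := by
    intro i j
    ext a b
    by_cases hia : i = a <;> by_cases hjb : j = b <;>
      simp [hM, hv, single, hia, hjb]
  have hstd : ∀ i j : Fin n, (δ (single i j (1 : ℂ)))ᴴ = δ (single j i 1) := by
    intro i j
    ext x y
    have h := congrFun (congrFun hC (j, x)) (i, y)
    simp only [conjTranspose_apply, amplify, Matrix.of_apply] at h
    rw [hblock, hblock] at h
    rw [conjTranspose_apply]
    exact h
  -- expand a in the standard basis
  conv_lhs => rw [matrix_eq_sum_single a]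
  conv_rhs => rw [matrix_eq_sum_single a]
  rw [conjTranspose_sum, map_sum, map_sum, conjTranspose_sum]
  refine Finset.sum_congr rfl fun i _ => ?_
  rw [conjTranspose_sum, map_sum, map_sum, conjTranspose_sum]
  refine Finset.sum_congr rfl fun j _ => ?_
  have h1 : single i j (a i j) = (a i j) • single i j (1 : ℂ) := by
    rw [smul_single]; simp
  have h2 : (single i j (a i j))ᴴ = star (a i j) • single j i (1 : ℂ) := by
    ext x y
    by_cases hjx : j = x <;> by_cases hiy : i = y <;>
      simp [conjTranspose_apply, single, hjx, hiy]
  rw [h2, h1, δ.map_smul, δ.map_smul, conjTranspose_smul, hstd]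

/-- If δ is completely positive then the orthonormal basis is closed under
conjugate transpose. -/
theorem stmt_4 (n : ℕ) (hn : 1 ≤ n)
    (α : Fin (n * n) → Matrix (Fin n) (Fin n) ℂ)
    (horth : ∀ i j, hsInner (α i) (α j) = if i = j then 1 else 0)
    (hspan : Submodule.span ℂ (Set.range α) = ⊤)
    (δ : Matrix (Fin n) (Fin n) ℂ →ₗ[ℂ] Matrix (Fin n × Fin n) (Fin n × Fin n) ℂ)
    (hδ : ∀ i, δ (α i) = α i ⊗ₖ α i)
    (hCP : IsCompletelyPositive δ) :
    Set.range α = Set.range fun i => (α i)ᴴ := by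
  classical
  -- linear independence
  have hli : LinearIndependent ℂ α := by
    rw [linearIndependent_iff']
    intro s g hg i hi
    have h := congrArg (hsInnerL (α i)) hg
    rw [map_sum, map_zero] at h
    have hc : ∀ j ∈ s, hsInnerL (α i) (g j • α j) = if i = j then g j else 0 := by
      intro j _
      rw [_root_.map_smul, smul_eq_mul, hsInnerL_apply, horth]
      split <;> simp
    rw [Finset.sum_congr rfl hc, Finset.sum_ite_eq s i (fun j => g j), if_pos hi] at h
    exact h
  let b : Module.Basis (Fin (n * n)) ℂ (Matrix (Fin n) (Fin n) ℂ) :=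
    Module.Basis.mk hli (by rw [hspan])
  have hb : ∀ i, b i = α i := fun i => Module.Basis.mk_apply hli _ i
  have main : ∀ i, ∃ j, (α i)ᴴ = α j := by
    intro i
    set c : Fin (n * n) → ℂ := fun j => b.repr ((α i)ᴴ) j with hcdef
    have hexp : (α i)ᴴ = ∑ j, c j • α j := by
      conv_lhs => rw [← b.sum_repr ((α i)ᴴ)]
      simp [hb, hcdef]
    -- two expressions for δ ((α i)ᴴ)
    have e1 : δ ((α i)ᴴ) = ∑ j, c j • (α j ⊗ₖ α j) := by
      conv_lhs => rw [hexp]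
      rw [map_sum]
      refine Finset.sum_congr rfl fun j _ => ?_
      rw [δ.map_smul, hδ]
    have e2 : δ ((α i)ᴴ) = ∑ j, ∑ k, (c j * c k) • (α j ⊗ₖ α k) := by
      rw [herm_of_CP δ hCP, hδ, conjT_kron, hexp, kron_sum_sum]
      refine Finset.sum_congr rfl fun j _ => Finset.sum_congr rfl fun k _ => ?_
      rw [smul_kronecker, kronecker_smul, smul_smul]
    -- pair both expansions with α j ⊗ₖ α k
    have key : ∀ j k, c j * c k = if j = k then c j else 0 := by
      intro j k
      have h := congrArg (hsInnerL (α j ⊗ₖ α k)) (e1.symm.trans e2)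
      simp only [map_sum] at h
      have hL : ∀ p q : Fin (n * n), hsInnerL (α j ⊗ₖ α k) (α p ⊗ₖ α q)
          = (if j = p then (1 : ℂ) else 0) * (if k = q then 1 else 0) := fun p q => by
        rw [hsInnerL_apply, hsInner_kron, horth, horth]
      have hLhs : (∑ p, hsInnerL (α j ⊗ₖ α k) (c p • (α p ⊗ₖ α p)))
          = if k = j then c j else 0 := by
        have hc : ∀ p ∈ Finset.univ, hsInnerL (α j ⊗ₖ α k) (c p • (α p ⊗ₖ α p))
            = if j = p then (if k = p then c p else 0) else 0 := by
          intro p _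
          rw [_root_.map_smul, smul_eq_mul, hL]
          rcases eq_or_ne j p with rfl | hjp
          · split <;> simp
          · simp [hjp]
        rw [Finset.sum_congr rfl hc,
          Finset.sum_ite_eq Finset.univ j (fun p => if k = p then c p else 0),
          if_pos (Finset.mem_univ j)]
      have hRhs : (∑ p, ∑ q, hsInnerL (α j ⊗ₖ α k) ((c p * c q) • (α p ⊗ₖ α q)))
          = c j * c k := by
        have hc : ∀ p ∈ Finset.univ,
            (∑ q, hsInnerL (α j ⊗ₖ α k) ((c p * c q) • (α p ⊗ₖ α q)))
            = if j = p then c p * c k else 0 := by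
          intro p _
          have hq : ∀ q ∈ Finset.univ, hsInnerL (α j ⊗ₖ α k) ((c p * c q) • (α p ⊗ₖ α q))
              = if k = q then (if j = p then c p * c q else 0) else 0 := by
            intro q _
            rw [_root_.map_smul, smul_eq_mul, hL]
            rcases eq_or_ne k q with rfl | hkq
            · split <;> simp
            · simp [hkq]
          rw [Finset.sum_congr rfl hq,
            Finset.sum_ite_eq Finset.univ k (fun q => if j = p then c p * c q else 0),
            if_pos (Finset.mem_univ k)]
        rw [Finset.sum_congr rfl hc,
          Finset.sum_ite_eq Finset.univ j (fun p => c p * c k),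
          if_pos (Finset.mem_univ j)]
      rw [hLhs, hRhs] at h
      rw [← h]
      rcases eq_or_ne j k with rfl | hjk
      · rfl
      · rw [if_neg (Ne.symm hjk), if_neg hjk]
    -- some coefficient is nonzero
    have hne : ∃ j, c j ≠ 0 := by
      by_contra hall
      push_neg at hall
      have h0 : (α i)ᴴ = 0 := by rw [hexp]; simp [hall]
      have hzero : α i = 0 := by
        have := congrArg conjTranspose h0
        simpa using this
      have h1 := horth i i
      rw [hzero, if_pos rfl] at h1
      simp [hsInner] at h1
    obtain ⟨j, hj⟩ := hne
    have hcj : c j = 1 := by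
      have h := key j j
      rw [if_pos rfl] at h
      have h2 : c j * (c j - 1) = 0 := by rw [mul_sub, h]; ring
      rcases mul_eq_zero.mp h2 with h' | h'
      · exact absurd h' hj
      · exact sub_eq_zero.mp h'
    have hck : ∀ k, k ≠ j → c k = 0 := by
      intro k hk
      have h := key j k
      rw [if_neg (fun hh => hk hh.symm)] at h
      rcases mul_eq_zero.mp h with h' | h'
      · exact absurd h' hj
      · exact h'
    refine ⟨j, ?_⟩
    rw [hexp, Finset.sum_eq_single j (fun k _ hk => by rw [hck k hk, zero_smul])
      (fun h => absurd (Finset.mem_univ j) h), hcj, one_smul]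
  -- conclude set equality
  ext x
  constructor
  · rintro ⟨i, rfl⟩
    obtain ⟨j, hj⟩ := main i
    exact ⟨j, show (α j)ᴴ = α i by rw [← hj, conjTranspose_conjTranspose]⟩
  · rintro ⟨i, rfl⟩
    obtain ⟨j, hj⟩ := main i
    exact ⟨j, show α j = (α i)ᴴ from hj.symm⟩
end
end

section
/- Fix n ≥ 1, let (α i)_{i : Fin (n*n)} be an orthonormal basis of Mₙ(ℂ) for the Hilbert–Schmidt inner product, and let δ : Mₙ(ℂ) → M_{n·n}(ℂ) be the unique linear map with δ(α i) = (α i) ⊗ₖ (α i). If δ is completely positive, then for all matrices a, b ∈ Mₙ(ℂ): δ(1)·δ(a·b) = δ(a)·δ(b), where the products on both sides are matrix products (in Mₙ(ℂ) inside δ, and in M_{n·n}(ℂ) outside). -/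
open Matrix Kronecker ComplexOrder

noncomputable section

lemma hsInner_eq_sum {m : Type*} [Fintype m] (a b : Matrix m m ℂ) :
    hsInner a b = ∑ p : m, ∑ q : m, star (a q p) * b q p := by
  simp [hsInner, Matrix.trace, Matrix.diag, Matrix.mul_apply, conjTranspose_apply]

lemma hsInner_stdBasisMatrix {m : Type*} [Fintype m] [DecidableEq m]
    (a : Matrix m m ℂ) (c d : m) :
    hsInner a (single c d 1) = star (a c d) := by
  rw [hsInner_eq_sum]
  simp only [single, of_apply, mul_ite, mul_one, mul_zero, ite_and]
  rw [Finset.sum_comm]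
  simp

lemma conjTranspose_kron {m l : Type*} [Fintype m] [Fintype l]
    (a : Matrix m m ℂ) (c : Matrix l l ℂ) : (a ⊗ₖ c)ᴴ = aᴴ ⊗ₖ cᴴ := by
  ext ⟨i,j⟩ ⟨k,p⟩
  simp [conjTranspose_apply, kroneckerMap_apply, star_mul']

lemma hsInner_kronecker {m l : Type*} [Fintype m] [Fintype l]
    (a b : Matrix m m ℂ) (c d : Matrix l l ℂ) :
    hsInner (a ⊗ₖ c) (b ⊗ₖ d) = hsInner a b * hsInner c d := by
  unfold hsInner
  rw [conjTranspose_kron, ← Matrix.mul_kronecker_mul, Matrix.trace_kronecker]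

lemma sum_comm₃ {K L M : Type*} [Fintype K] [Fintype L] [Fintype M] (f : K → L → M → ℂ) :
    ∑ i, ∑ j, ∑ t, f i j t = ∑ t, ∑ i, ∑ j, f i j t :=
  calc ∑ i, ∑ j, ∑ t, f i j t = ∑ i, ∑ t, ∑ j, f i j t :=
        Finset.sum_congr rfl (fun i _ => Finset.sum_comm ..)
    _ = ∑ t, ∑ i, ∑ j, f i j t := Finset.sum_comm ..

/-- If δ is completely positive then δ(1)·δ(ab) = δ(a)·δ(b) for all a, b. -/
theorem stmt_6 (n : ℕ) (hn : 1 ≤ n)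
    (α : Fin (n * n) → Matrix (Fin n) (Fin n) ℂ)
    (horth : ∀ i j, hsInner (α i) (α j) = if i = j then 1 else 0)
    (hspan : Submodule.span ℂ (Set.range α) = ⊤)
    (δ : Matrix (Fin n) (Fin n) ℂ →ₗ[ℂ] Matrix (Fin n × Fin n) (Fin n × Fin n) ℂ)
    (hδ : ∀ i, δ (α i) = α i ⊗ₖ α i)
    (hCP : IsCompletelyPositive δ) :
    ∀ a b : Matrix (Fin n) (Fin n) ℂ, δ 1 * δ (a * b) = δ a * δ b := by
  -- The maximally entangled projector
  set M₀ : Matrix (Fin n × Fin n) (Fin n × Fin n) ℂ :=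
    Matrix.of fun p q => (if p.1 = p.2 then (1:ℂ) else 0) * (if q.1 = q.2 then 1 else 0) with hM₀def
  have hM₀ : M₀.PosSemidef := by
    refine posSemidef_iff_dotProduct_mulVec.mpr ⟨?_, ?_⟩
    · ext p q
      by_cases h1 : p.1 = p.2 <;> by_cases h2 : q.1 = q.2 <;>
        simp [hM₀def, conjTranspose_apply, h1, h2]
    · intro x
      set s := ∑ q : Fin n × Fin n, if q.1 = q.2 then x q else 0 with hs
      have hmv : ∀ p : Fin n × Fin n, (M₀ *ᵥ x) p = if p.1 = p.2 then s else 0 := by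
        intro p
        by_cases h : p.1 = p.2 <;> simp [hM₀def, mulVec, dotProduct, h, hs, ite_mul]
      have hdp : star x ⬝ᵥ M₀ *ᵥ x = star s * s := by
        simp only [dotProduct, Pi.star_apply]
        rw [show star s * s = (∑ p : Fin n × Fin n, if p.1 = p.2 then star (x p) else 0) * s by
          rw [hs]; congr 1; rw [star_sum]; apply Finset.sum_congr rfl; intro p _;
          split <;> simp]
        rw [Finset.sum_mul]
        apply Finset.sum_congr rfl; intro p _
        rw [hmv p]
        split <;> ring
      rw [hdp, mul_comm, show star s = (starRingEnd ℂ) s from rfl, Complex.mul_conj]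
      exact_mod_cast Complex.normSq_nonneg s
  obtain ⟨B, hB⟩ := (by open scoped MatrixOrder in exact CStarAlgebra.nonneg_iff_eq_star_mul_self.mp (hCP n M₀ hM₀).nonneg :
    ∃ B : Matrix (Fin n × Fin n × Fin n) (Fin n × Fin n × Fin n) ℂ, amplify δ n M₀ = star B * B)
  -- Kraus operators
  set V : (Fin n × Fin n × Fin n) → Matrix (Fin n × Fin n) (Fin n) ℂ :=
    fun t => Matrix.of fun c i => star (B t (i, c)) with hVdef
  have hEntry : ∀ (i j : Fin n) (c d : Fin n × Fin n),
      δ (single i j 1) c d = ∑ t : Fin n × Fin n × Fin n, V t c i * star (V t d j) := by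
    intro i j c d
    have h1 : (Matrix.of fun a b => M₀ (i,a) (j,b)) = single i j (1:ℂ) := by
      ext a b
      by_cases ha : i = a <;> by_cases hb : j = b <;>
        simp [hM₀def, single, ha, hb]
    have h2 : δ (single i j 1) c d = amplify δ n M₀ (i,c) (j,d) := by
      rw [← h1]; rfl
    rw [h2, hB]
    simp [Matrix.mul_apply, conjTranspose_apply, hVdef, star_star]
  have hK : ∀ a, δ a = ∑ t : Fin n × Fin n × Fin n, V t * a * (V t)ᴴ := by
    intro a
    have expand : δ a = ∑ i, ∑ j, a i j • δ (single i j 1) := by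
      conv_lhs => rw [matrix_eq_sum_single a]
      rw [map_sum]
      apply Finset.sum_congr rfl; intro i _
      rw [map_sum]
      apply Finset.sum_congr rfl; intro j _
      rw [show single i j (a i j) = a i j • single i j (1:ℂ) by
        rw [smul_single, smul_eq_mul, mul_one], _root_.map_smul]
    ext c d
    rw [expand]
    simp only [Matrix.sum_apply, Matrix.smul_apply, smul_eq_mul, hEntry,
      Matrix.mul_apply, conjTranspose_apply, Finset.mul_sum, Finset.sum_mul]
    rw [sum_comm₃ (fun i j t => a i j * (V t c i * star (V t d j)))]
    apply Finset.sum_congr rfl; intro t _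
    rw [Finset.sum_comm]
    apply Finset.sum_congr rfl; intro j _
    apply Finset.sum_congr rfl; intro i _
    ring
  have hsadd : ∀ (a x y : Matrix (Fin n) (Fin n) ℂ), hsInner a (x + y) = hsInner a x + hsInner a y := by
    intro a x y; simp [hsInner, Matrix.mul_add]
  have hssmul : ∀ (a : Matrix (Fin n) (Fin n) ℂ) (r : ℂ) (x : Matrix (Fin n) (Fin n) ℂ),
      hsInner a (r • x) = r * hsInner a x := by
    intro a r x; simp [hsInner, Matrix.mul_smul, smul_eq_mul]
  have hexp : ∀ m : Matrix (Fin n) (Fin n) ℂ, ∑ j, hsInner (α j) m • α j = m := by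
    let L : Matrix (Fin n) (Fin n) ℂ →ₗ[ℂ] Matrix (Fin n) (Fin n) ℂ :=
      { toFun := fun m => ∑ j, hsInner (α j) m • α j
        map_add' := by intro x y; simp [hsadd, add_smul, Finset.sum_add_distrib]
        map_smul' := by intro r x; simp [hssmul, Finset.smul_sum, smul_smul]
      }
    have hL : L = LinearMap.id := by
      apply LinearMap.ext_on hspan
      rintro x ⟨i, rfl⟩
      show ∑ j, hsInner (α j) (α i) • α j = α i
      simp only [horth]
      simp [ite_smul]
    intro m
    exact LinearMap.congr_fun hL m
  have hδE : ∀ c d : Fin n, δ (single c d 1) =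
      ∑ j, hsInner (α j) (single c d 1) • (α j ⊗ₖ α j) := by
    intro c d
    conv_lhs => rw [← hexp (single c d 1)]
    rw [map_sum]
    apply Finset.sum_congr rfl; intro j _
    rw [_root_.map_smul, hδ]
  have hαi : ∀ i : Fin (n*n), ∑ s : Fin n × Fin n × Fin n, (V s)ᴴ * (α i ⊗ₖ α i) * V s = α i := by
    intro i
    ext c d
    have lhs_eq : (∑ s : Fin n × Fin n × Fin n, (V s)ᴴ * (α i ⊗ₖ α i) * V s) c d
        = ∑ p : Fin n × Fin n, ∑ q : Fin n × Fin n,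
            (α i ⊗ₖ α i) p q * star (δ (single c d 1) p q) := by
      simp only [Matrix.sum_apply, Matrix.mul_apply, conjTranspose_apply,
        Finset.sum_mul, Finset.mul_sum]
      simp only [hEntry, star_sum, star_mul', star_star, Finset.mul_sum]
      rw [sum_comm₃ (fun s q p => star (V s p c) * (α i ⊗ₖ α i) p q * V s q d)]
      apply Finset.sum_congr rfl; intro p _
      rw [Finset.sum_comm]
      apply Finset.sum_congr rfl; intro q _
      apply Finset.sum_congr rfl; intro s _
      ring
    have inner : ∀ j, ∑ p : Fin n × Fin n, ∑ q : Fin n × Fin n,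
        (α i ⊗ₖ α i) p q * star ((α j ⊗ₖ α j) p q) = if j = i then 1 else 0 := by
      intro j
      have hk := hsInner_kronecker (α j) (α i) (α j) (α i)
      rw [horth j i] at hk
      have : ∑ p : Fin n × Fin n, ∑ q : Fin n × Fin n,
          (α i ⊗ₖ α i) p q * star ((α j ⊗ₖ α j) p q) = hsInner (α j ⊗ₖ α j) (α i ⊗ₖ α i) := by
        rw [hsInner_eq_sum, Finset.sum_comm]
        apply Finset.sum_congr rfl; intro p _
        apply Finset.sum_congr rfl; intro q _
        ring
      rw [this, hk]
      split <;> simp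
    rw [lhs_eq, hδE c d]
    simp only [Matrix.sum_apply, Matrix.smul_apply, smul_eq_mul, star_sum, star_mul',
      Finset.mul_sum]
    rw [sum_comm₃ (fun p q j => (α i ⊗ₖ α i) p q *
      (star (hsInner (α j) (single c d 1)) * star ((α j ⊗ₖ α j) p q)))]
    have : ∀ j : Fin (n*n), ∑ p : Fin n × Fin n, ∑ q : Fin n × Fin n,
        (α i ⊗ₖ α i) p q * (star (hsInner (α j) (single c d 1)) * star ((α j ⊗ₖ α j) p q))
        = star (hsInner (α j) (single c d 1)) * (if j = i then 1 else 0) := by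
      intro j
      rw [← inner j, Finset.mul_sum]
      apply Finset.sum_congr rfl; intro p _
      rw [Finset.mul_sum]
      apply Finset.sum_congr rfl; intro q _
      ring
    rw [Finset.sum_congr rfl (fun j _ => this j)]
    simp only [mul_ite, mul_one, mul_zero]
    rw [Finset.sum_ite_eq' Finset.univ i (fun j => star (hsInner (α j) (single c d 1)))]
    simp [hsInner_stdBasisMatrix]
  have key1 : ∀ b : Matrix (Fin n) (Fin n) ℂ,
      ∑ s : Fin n × Fin n × Fin n, (V s)ᴴ * δ b * V s = b := by
    let L₂ : Matrix (Fin n) (Fin n) ℂ →ₗ[ℂ] Matrix (Fin n) (Fin n) ℂ :=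
      { toFun := fun b => ∑ s : Fin n × Fin n × Fin n, (V s)ᴴ * δ b * V s
        map_add' := by intro x y; simp [map_add, Matrix.add_mul, Matrix.mul_add, Finset.sum_add_distrib]
        map_smul' := by intro r x; simp [_root_.map_smul, Matrix.smul_mul, Matrix.mul_smul, Finset.smul_sum]
      }
    have hL : L₂ = LinearMap.id := by
      apply LinearMap.ext_on hspan
      rintro x ⟨i, rfl⟩
      show ∑ s : Fin n × Fin n × Fin n, (V s)ᴴ * δ (α i) * V s = α i
      rw [hδ]
      exact hαi i
    intro b
    exact LinearMap.congr_fun hL b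
  set W : (Fin n × Fin n × Fin n) → (Fin n × Fin n × Fin n) → Matrix (Fin n) (Fin n) ℂ :=
    fun s t => (V s)ᴴ * V t with hWdef
  have key2 : ∀ i j k l : Fin n,
      ∑ s : Fin n × Fin n × Fin n, ∑ t : Fin n × Fin n × Fin n, W s t i k * star (W s t j l) =
        (if i = k then 1 else 0) * (if j = l then 1 else 0) := by
    have hmat : ∀ k l : Fin n, ∑ s : Fin n × Fin n × Fin n, ∑ t : Fin n × Fin n × Fin n,
        W s t * single k l 1 * (W s t)ᴴ = single k l 1 := by
      intro k l
      have h := key1 (single k l 1)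
      rw [hK (single k l 1)] at h
      calc ∑ s : Fin n × Fin n × Fin n, ∑ t : Fin n × Fin n × Fin n,
            W s t * single k l 1 * (W s t)ᴴ
          = ∑ s : Fin n × Fin n × Fin n,
              (V s)ᴴ * (∑ t : Fin n × Fin n × Fin n, V t * single k l 1 * (V t)ᴴ) * V s := by
            apply Finset.sum_congr rfl; intro s _
            rw [Matrix.mul_sum, Matrix.sum_mul]
            apply Finset.sum_congr rfl; intro t _
            rw [hWdef]
            simp only [conjTranspose_mul, conjTranspose_conjTranspose]
            simp [Matrix.mul_assoc]
        _ = single k l 1 := h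
    intro i j k l
    have hA : ∀ A : Matrix (Fin n) (Fin n) ℂ,
        (A * single k l (1:ℂ) * Aᴴ) i j = A i k * star (A j l) := by
      intro A
      simp only [Matrix.mul_apply, conjTranspose_apply, single, of_apply, ite_and,
        mul_ite, ite_mul, mul_zero, zero_mul, mul_one]
      simp [Finset.sum_ite_eq, Finset.mul_sum]
    have h := congrFun (congrFun (hmat k l) i) j
    simp only [Matrix.sum_apply] at h
    rw [show (single k l 1 : Matrix (Fin n) (Fin n) ℂ) i j
        = (if i = k then (1:ℂ) else 0) * (if j = l then 1 else 0) by
      by_cases h1 : i = k <;> by_cases h2 : j = l <;> simp [single, h1, h2] <;>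
        simp [eq_comm, h1, h2]] at h
    rw [← h]
    apply Finset.sum_congr rfl; intro s _
    apply Finset.sum_congr rfl; intro t _
    exact (hA (W s t)).symm
  have key3 : ∀ s t : Fin n × Fin n × Fin n,
      W s t = ((∑ p, W s t p p) / n) • (1 : Matrix (Fin n) (Fin n) ℂ) := by
    intro s t
    have hnne : (n:ℂ) ≠ 0 := Nat.cast_ne_zero.mpr (by omega)
    set c : ℂ := (∑ p, W s t p p) / n with hc
    set x : Fin n × Fin n → ℂ :=
      fun ik => W s t ik.1 ik.2 - c * (if ik.1 = ik.2 then 1 else 0) with hx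
    have h1 : ∑ i : Fin n, x (i,i) = 0 := by
      have e1 : ∑ i : Fin n, x (i,i) = (∑ p, W s t p p) - n * c := by
        simp [hx, Finset.sum_sub_distrib, Finset.card_univ, mul_comm]
      rw [e1, hc]
      field_simp
      ring
    set g : (Fin n × Fin n × Fin n) → (Fin n × Fin n × Fin n) → ℂ :=
      fun u v => ∑ ik : Fin n × Fin n, star (x ik) * W u v ik.1 ik.2 with hg
    have hdiag : ∑ ik : Fin n × Fin n, star (x ik) * (if ik.1 = ik.2 then (1:ℂ) else 0) = 0 := by
      rw [Fintype.sum_prod_type]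
      simp only [mul_ite, mul_one, mul_zero]
      rw [show (∑ i : Fin n, ∑ k : Fin n, if i = k then star (x (i,k)) else 0)
          = ∑ i : Fin n, star (x (i,i)) by
        apply Finset.sum_congr rfl; intro i _
        simp]
      rw [← star_sum, h1, star_zero]
    have h2 : ∑ u : Fin n × Fin n × Fin n, ∑ v : Fin n × Fin n × Fin n,
        g u v * star (g u v) = 0 := by
      have expand : ∀ u v, g u v * star (g u v)
          = ∑ ik : Fin n × Fin n, ∑ jl : Fin n × Fin n,
              (star (x ik) * x jl) * (W u v ik.1 ik.2 * star (W u v jl.1 jl.2)) := by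
        intro u v
        rw [hg, show star (∑ jl : Fin n × Fin n, star (x jl) * W u v jl.1 jl.2)
            = ∑ jl : Fin n × Fin n, x jl * star (W u v jl.1 jl.2) by
          rw [star_sum]; apply Finset.sum_congr rfl; intro jl _; rw [star_mul', star_star]]
        rw [Finset.sum_mul_sum]
        apply Finset.sum_congr rfl; intro ik _
        apply Finset.sum_congr rfl; intro jl _
        ring
      calc ∑ u : Fin n × Fin n × Fin n, ∑ v : Fin n × Fin n × Fin n, g u v * star (g u v)
          = ∑ uv : (Fin n × Fin n × Fin n) × (Fin n × Fin n × Fin n),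
              g uv.1 uv.2 * star (g uv.1 uv.2) :=
            (Fintype.sum_prod_type (f := fun uv => g uv.1 uv.2 * star (g uv.1 uv.2))).symm
        _ = ∑ uv : (Fin n × Fin n × Fin n) × (Fin n × Fin n × Fin n),
              ∑ ik : Fin n × Fin n, ∑ jl : Fin n × Fin n,
              (star (x ik) * x jl) * (W uv.1 uv.2 ik.1 ik.2 * star (W uv.1 uv.2 jl.1 jl.2)) :=
            Finset.sum_congr rfl (fun uv _ => expand uv.1 uv.2)
        _ = ∑ ik : Fin n × Fin n, ∑ jl : Fin n × Fin n,
              ∑ uv : (Fin n × Fin n × Fin n) × (Fin n × Fin n × Fin n),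
              (star (x ik) * x jl) * (W uv.1 uv.2 ik.1 ik.2 * star (W uv.1 uv.2 jl.1 jl.2)) :=
            (sum_comm₃ _).symm
        _ = ∑ ik : Fin n × Fin n, ∑ jl : Fin n × Fin n,
              (star (x ik) * x jl) *
                ((if ik.1 = ik.2 then 1 else 0) * (if jl.1 = jl.2 then (1:ℂ) else 0)) := by
            apply Finset.sum_congr rfl; intro ik _
            apply Finset.sum_congr rfl; intro jl _
            rw [← Finset.mul_sum]
            congr 1
            rw [Fintype.sum_prod_type]
            exact key2 ik.1 jl.1 ik.2 jl.2
        _ = (∑ ik : Fin n × Fin n, star (x ik) * (if ik.1 = ik.2 then 1 else 0))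
            * (∑ jl : Fin n × Fin n, x jl * (if jl.1 = jl.2 then 1 else 0)) := by
            rw [Finset.sum_mul_sum]
            apply Finset.sum_congr rfl; intro ik _
            apply Finset.sum_congr rfl; intro jl _
            ring
        _ = 0 := by rw [hdiag, zero_mul]
    have h3 : g s t = 0 := by
      have h2' : ∑ u : Fin n × Fin n × Fin n, ∑ v : Fin n × Fin n × Fin n,
          Complex.normSq (g u v) = 0 := by
        have : ∑ u : Fin n × Fin n × Fin n, ∑ v : Fin n × Fin n × Fin n,
            ((Complex.normSq (g u v) : ℝ) : ℂ) = 0 := by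
          rw [← h2]
          apply Finset.sum_congr rfl; intro u _
          apply Finset.sum_congr rfl; intro v _
          rw [show star (g u v) = (starRingEnd ℂ) (g u v) from rfl, Complex.mul_conj]
        exact_mod_cast this
      have houter := (Finset.sum_eq_zero_iff_of_nonneg
        (fun u _ => Finset.sum_nonneg (fun v _ => Complex.normSq_nonneg _))).mp h2' s
        (Finset.mem_univ s)
      have hinner := (Finset.sum_eq_zero_iff_of_nonneg
        (fun v _ => Complex.normSq_nonneg _)).mp houter t (Finset.mem_univ t)
      exact Complex.normSq_eq_zero.mp hinner
    have h4 : ∑ ik : Fin n × Fin n, star (x ik) * x ik = 0 := by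
      have e4 : ∑ ik : Fin n × Fin n, star (x ik) * x ik
          = g s t - c * ∑ ik : Fin n × Fin n, star (x ik) * (if ik.1 = ik.2 then (1:ℂ) else 0) := by
        rw [hg, Finset.mul_sum, ← Finset.sum_sub_distrib]
        apply Finset.sum_congr rfl; intro ik _
        rw [hx]
        ring
      rw [e4, h3, hdiag]
      ring
    have h5 : ∀ ik : Fin n × Fin n, x ik = 0 := by
      have h4' : ∑ ik : Fin n × Fin n, Complex.normSq (x ik) = 0 := by
        have : ∑ ik : Fin n × Fin n, ((Complex.normSq (x ik) : ℝ) : ℂ) = 0 := by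
          rw [← h4]
          apply Finset.sum_congr rfl; intro ik _
          rw [mul_comm, show star (x ik) = (starRingEnd ℂ) (x ik) from rfl, Complex.mul_conj]
        exact_mod_cast this
      intro ik
      exact Complex.normSq_eq_zero.mp ((Finset.sum_eq_zero_iff_of_nonneg
        (fun v _ => Complex.normSq_nonneg _)).mp h4' ik (Finset.mem_univ ik))
    ext i k
    have h0 := sub_eq_zero.mp (h5 (i, k))
    simp only [Matrix.smul_apply, Matrix.one_apply, smul_eq_mul]
    exact h0
  -- final computation
  intro a b
  rw [hK 1, hK (a*b), hK a, hK b, Finset.sum_mul_sum, Finset.sum_mul_sum]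
  apply Finset.sum_congr rfl; intro s _
  apply Finset.sum_congr rfl; intro t _
  have assoc : ∀ (x y : Matrix (Fin n) (Fin n) ℂ),
      (V s * x * (V s)ᴴ) * (V t * y * (V t)ᴴ) = V s * (x * W s t * y) * (V t)ᴴ := by
    intro x y; simp [hWdef, Matrix.mul_assoc]
  rw [assoc, assoc, key3 s t]
  congr 1
  simp [Matrix.mul_smul, Matrix.smul_mul, Matrix.mul_assoc, Matrix.mul_one, Matrix.one_mul]
end
end

section
/- Fix n ≥ 1, let (α i)_{i : Fin (n*n)} be an orthonormal basis of Mₙ(ℂ) for the Hilbert–Schmidt inner product, and let δ : Mₙ(ℂ) → M_{n·n}(ℂ) be the unique linear map with δ(α i) = (α i) ⊗ₖ (α i). If δ is completely positive, then any two positive semidefinite basis elements commute: if α i and α j are both positive semidefinite, then (α i)·(α j) = (α j)·(α i). -/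
open Matrix Kronecker ComplexOrder

noncomputable section

lemma trace_zero_of_self {m : Type*} [Fintype m] [DecidableEq m] (X : Matrix m m ℂ)
    (h : (Xᴴ * X).trace = 0) : X = 0 := by
  have h' : (∑ j, ∑ i, Complex.normSq (X i j) : ℝ) = 0 := by
    have : (Xᴴ * X).trace = ((∑ j, ∑ i, Complex.normSq (X i j) : ℝ) : ℂ) := by
      simp [Matrix.trace, Matrix.diag, Matrix.mul_apply, Matrix.conjTranspose_apply,
        Complex.normSq_eq_conj_mul_self]
    rw [this] at h
    exact_mod_cast h
  ext i j
  have hj := (Finset.sum_eq_zero_iff_of_nonneg (fun j _ =>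
    Finset.sum_nonneg fun i _ => Complex.normSq_nonneg (X i j))).mp h' j (Finset.mem_univ j)
  have hi := (Finset.sum_eq_zero_iff_of_nonneg (fun i _ =>
    Complex.normSq_nonneg (X i j))).mp hj i (Finset.mem_univ i)
  simpa using Complex.normSq_eq_zero.mp hi

/-- If δ is completely positive then positive semidefinite basis elements commute
pairwise. -/
theorem stmt_7 (n : ℕ) (hn : 1 ≤ n)
    (α : Fin (n * n) → Matrix (Fin n) (Fin n) ℂ)
    (horth : ∀ i j, hsInner (α i) (α j) = if i = j then 1 else 0)
    (hspan : Submodule.span ℂ (Set.range α) = ⊤)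
    (δ : Matrix (Fin n) (Fin n) ℂ →ₗ[ℂ] Matrix (Fin n × Fin n) (Fin n × Fin n) ℂ)
    (hδ : ∀ i, δ (α i) = α i ⊗ₖ α i)
    (hCP : IsCompletelyPositive δ) :
    ∀ i j, (α i).PosSemidef → (α j).PosSemidef → α i * α j = α j * α i := by
  intro i j ha hb
  rcases eq_or_ne i j with rfl | hij
  · rfl
  have h0 : hsInner (α i) (α j) = 0 := by rw [horth i j, if_neg hij]
  set a := α i
  set b := α j
  set s := (open scoped MatrixOrder in CFC.sqrt a) with hs
  set t := (open scoped MatrixOrder in CFC.sqrt b) with ht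
  have hss : s * s = a := by
    open scoped MatrixOrder in exact CFC.sqrt_mul_sqrt_self a (Matrix.nonneg_iff_posSemidef.mpr ha)
  have htt : t * t = b := by
    open scoped MatrixOrder in exact CFC.sqrt_mul_sqrt_self b (Matrix.nonneg_iff_posSemidef.mpr hb)
  have hsH : sᴴ = s := by
    open scoped MatrixOrder in exact (Matrix.nonneg_iff_posSemidef.mp (CFC.sqrt_nonneg a)).1
  have htH : tᴴ = t := by
    open scoped MatrixOrder in exact (Matrix.nonneg_iff_posSemidef.mp (CFC.sqrt_nonneg b)).1
  have hts : t * s = 0 := by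
    apply trace_zero_of_self
    have e1 : (t * s)ᴴ * (t * s) = s * (t * (t * s)) := by
      rw [Matrix.conjTranspose_mul, hsH, htH]; noncomm_ring
    rw [e1, Matrix.trace_mul_comm]
    have e2 : t * (t * s) * s = b * a := by
      rw [← hss, ← htt]; noncomm_ring
    rw [e2, Matrix.trace_mul_comm b a, ← ha.1]
    exact h0
  have hst : s * t = 0 := by
    have e : (t * s)ᴴ = s * t := by rw [Matrix.conjTranspose_mul, hsH, htH]
    rw [← e, hts, Matrix.conjTranspose_zero]
  have hab : a * b = 0 := by
    rw [← hss, ← htt]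
    calc s * s * (t * t) = s * (s * t) * t := by noncomm_ring
    _ = 0 := by rw [hst]; simp
  have hba : b * a = 0 := by
    rw [← hss, ← htt]
    calc t * t * (s * s) = t * (t * s) * s := by noncomm_ring
    _ = 0 := by rw [hts]; simp
  rw [hab, hba]
end
end

section
/- Fix n ≥ 1, let (α i)_{i : Fin (n*n)} be an orthonormal basis of Mₙ(ℂ) for the Hilbert–Schmidt inner product, and let δ : Mₙ(ℂ) → M_{n·n}(ℂ) be the unique linear map with δ(α i) = (α i) ⊗ₖ (α i), with Hilbert–Schmidt adjoint δ†. If δ is completely positive, then δ†(1) ≥ 1, i.e. δ†(1) − 1 is positive semidefinite; equivalently all eigenvalues of δ†(1) are at least 1. -/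
open Matrix Kronecker ComplexOrder

noncomputable section

section aux

variable {m : Type*} [Fintype m]

lemma hsInner_zero_right (a : Matrix m m ℂ) : hsInner a 0 = 0 := by
  simp [hsInner]

lemma hsInner_add_right (a b c : Matrix m m ℂ) :
    hsInner a (b + c) = hsInner a b + hsInner a c := by
  simp [hsInner, Matrix.mul_add]

lemma hsInner_smul_right (r : ℂ) (a b : Matrix m m ℂ) :
    hsInner a (r • b) = r * hsInner a b := by
  simp [hsInner, Matrix.mul_smul]

lemma hsInner_zero_left (a : Matrix m m ℂ) : hsInner 0 a = 0 := by
  simp [hsInner]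

lemma hsInner_add_left (a b c : Matrix m m ℂ) :
    hsInner (a + b) c = hsInner a c + hsInner b c := by
  simp [hsInner, Matrix.add_mul]

lemma hsInner_smul_left (r : ℂ) (a b : Matrix m m ℂ) :
    hsInner (r • a) b = (starRingEnd ℂ) r * hsInner a b := by
  simp [hsInner, Matrix.smul_mul, Matrix.conjTranspose_smul]

lemma conjTranspose_kronecker {n p : Type*} (A : Matrix n n ℂ) (B : Matrix p p ℂ) :
    (A ⊗ₖ B)ᴴ = Aᴴ ⊗ₖ Bᴴ := by
  ext ⟨i, j⟩ ⟨k, l⟩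
  simp [Matrix.conjTranspose_apply, Matrix.kroneckerMap_apply]

lemma hsInner_kron_s10 {n p : Type*} [Fintype n] [Fintype p]
    (A C : Matrix n n ℂ) (B D : Matrix p p ℂ) :
    hsInner (A ⊗ₖ B) (C ⊗ₖ D) = hsInner A C * hsInner B D := by
  rw [hsInner, conjTranspose_kronecker, ← Matrix.mul_kronecker_mul,
    Matrix.trace_kronecker]
  rfl

lemma star_mul_self_eq (z : ℂ) : star z * z = ((‖z‖ : ℂ)) ^ 2 :=
  RCLike.conj_mul z

lemma star_dotProduct_comm (u w : m → ℂ) :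
    star u ⬝ᵥ w = star (star w ⬝ᵥ u) := by
  simp [dotProduct, mul_comm]

/-- A complex matrix whose quadratic form is real everywhere is Hermitian. -/
lemma isHermitian_of_real_quadratic [DecidableEq m] (M : Matrix m m ℂ)
    (h : ∀ x : m → ℂ, (starRingEnd ℂ) (star x ⬝ᵥ (M *ᵥ x)) = star x ⬝ᵥ (M *ᵥ x)) :
    M.IsHermitian := by
  rw [Matrix.isHermitian_iff_isSymmetric, LinearMap.isSymmetric_iff_inner_map_self_real]
  intro v
  obtain ⟨y, rfl⟩ := (WithLp.equiv 2 (m → ℂ)).symm.surjective v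
  rw [WithLp.equiv_symm_apply, Matrix.toEuclideanLin_apply_piLp_toLp, EuclideanSpace.inner_toLp_toLp,
    dotProduct_comm]
  have e1 : star (M *ᵥ y) ⬝ᵥ y = star (star y ⬝ᵥ (M *ᵥ y)) := star_dotProduct_comm _ _
  rw [e1]
  have := h y
  simp only [starRingEnd_apply] at this ⊢
  rw [star_star, this]

/-- For a PSD matrix `P`, the trace is a real number `T ≥ 0` with
`‖P‖_HS² = ⟨P,P⟩ ≤ T²`. -/
lemma psd_trace_bound [DecidableEq m] {P : Matrix m m ℂ} (hP : P.PosSemidef) :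
    ∃ T : ℝ, 0 ≤ T ∧ P.trace = (T : ℂ) ∧ hsInner P P ≤ ((T ^ 2 : ℝ) : ℂ) := by
  obtain ⟨B, rfl⟩ : ∃ B : Matrix m m ℂ, P = Bᴴ * B := by
    open scoped MatrixOrder in exact CStarAlgebra.nonneg_iff_eq_star_mul_self.mp hP.nonneg
  set u : m → EuclideanSpace ℂ m := fun i => (WithLp.equiv 2 (m → ℂ)).symm (fun k => B k i)
    with hu
  have hent : ∀ i j, (Bᴴ * B) i j = (inner ℂ (u i) (u j) : ℂ) := by
    intro i j
    rw [hu]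
    rw [WithLp.equiv_symm_apply, EuclideanSpace.inner_toLp_toLp, dotProduct_comm]
    simp [Matrix.mul_apply, Matrix.conjTranspose_apply, dotProduct]
  refine ⟨∑ i, ‖u i‖ ^ 2, by positivity, ?_, ?_⟩
  · rw [Matrix.trace]
    push_cast
    refine Finset.sum_congr rfl fun i _ => ?_
    rw [Matrix.diag_apply, hent i i, inner_self_eq_norm_sq_to_K]
    norm_cast
  · have h1 : hsInner (Bᴴ * B) (Bᴴ * B)
        = ((∑ i, ∑ j, ‖(Bᴴ * B) j i‖ ^ 2 : ℝ) : ℂ) := by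
      rw [hsInner, Matrix.trace]
      push_cast
      refine Finset.sum_congr rfl fun i _ => ?_
      rw [Matrix.diag_apply, Matrix.mul_apply]
      refine Finset.sum_congr rfl fun j _ => ?_
      rw [Matrix.conjTranspose_apply, star_mul_self_eq]
    rw [h1]
    have h2 : (∑ i, ∑ j, ‖(Bᴴ * B) j i‖ ^ 2 : ℝ) ≤ (∑ i, ‖u i‖ ^ 2) ^ 2 := by
      have hle : ∀ i j, ‖(Bᴴ * B) j i‖ ^ 2 ≤ ‖u j‖ ^ 2 * ‖u i‖ ^ 2 := by
        intro i j
        rw [hent j i, ← mul_pow]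
        exact pow_le_pow_left₀ (norm_nonneg _) (norm_inner_le_norm _ _) 2
      calc (∑ i, ∑ j, ‖(Bᴴ * B) j i‖ ^ 2 : ℝ)
          ≤ ∑ i, ∑ j, ‖u j‖ ^ 2 * ‖u i‖ ^ 2 := by
            refine Finset.sum_le_sum fun i _ => Finset.sum_le_sum fun j _ => hle i j
        _ = (∑ i, ‖u i‖ ^ 2) ^ 2 := by
            rw [sq, Finset.sum_mul_sum]
            exact Finset.sum_comm
    exact_mod_cast h2
end aux

/-- If δ is completely positive then δ†(1) ≥ 1, i.e. δ†(1) - 1 is positive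
semidefinite. -/
theorem stmt_10 (n : ℕ) (hn : 1 ≤ n)
    (α : Fin (n * n) → Matrix (Fin n) (Fin n) ℂ)
    (horth : ∀ i j, hsInner (α i) (α j) = if i = j then 1 else 0)
    (hspan : Submodule.span ℂ (Set.range α) = ⊤)
    (δ : Matrix (Fin n) (Fin n) ℂ →ₗ[ℂ] Matrix (Fin n × Fin n) (Fin n × Fin n) ℂ)
    (hδ : ∀ i, δ (α i) = α i ⊗ₖ α i)
    (δd : Matrix (Fin n × Fin n) (Fin n × Fin n) ℂ →ₗ[ℂ] Matrix (Fin n) (Fin n) ℂ)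
    (hadj : ∀ a b, hsInner (δ a) b = hsInner a (δd b))
    (hCP : IsCompletelyPositive δ) :
    (δd 1 - 1).PosSemidef := by
  -- δ is an isometry for the HS inner product
  have hmem : ∀ a : Matrix (Fin n) (Fin n) ℂ, a ∈ Submodule.span ℂ (Set.range α) := by
    intro a; rw [hspan]; trivial
  have key1 : ∀ i b, hsInner (δ (α i)) (δ b) = hsInner (α i) b := by
    intro i b
    induction hmem b using Submodule.span_induction with
    | mem x hx =>
      obtain ⟨j, rfl⟩ := hx
      rw [hδ, hδ, hsInner_kron_s10, horth]
      split_ifs <;> ring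
    | zero => simp [hsInner_zero_right]
    | add u v hu hv ihu ihv => rw [map_add, hsInner_add_right, hsInner_add_right, ihu, ihv]
    | smul r u hu ihu => rw [LinearMap.map_smul, hsInner_smul_right, hsInner_smul_right, ihu]
  have key : ∀ a b, hsInner (δ a) (δ b) = hsInner a b := by
    intro a b
    induction hmem a using Submodule.span_induction with
    | mem x hx =>
      obtain ⟨i, rfl⟩ := hx
      exact key1 i b
    | zero => simp [hsInner_zero_left]
    | add u v hu hv ihu ihv => rw [map_add, hsInner_add_left, hsInner_add_left, ihu, ihv]
    | smul r u hu ihu => rw [LinearMap.map_smul, hsInner_smul_left, hsInner_smul_left, ihu]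
  -- main quadratic-form computation
  have main : ∀ x : Fin n → ℂ, ∃ T s : ℝ,
      star x ⬝ᵥ (δd 1 *ᵥ x) = (T : ℂ) ∧ star x ⬝ᵥ x = (s : ℂ) ∧ s ≤ T := by
    intro x
    set ρ : Matrix (Fin n) (Fin n) ℂ := Matrix.vecMulVec x (star x) with hρ
    have ρHerm : ρᴴ = ρ := by
      ext i j
      simp [hρ, Matrix.conjTranspose_apply, Matrix.vecMulVec_apply, mul_comm]
    have hquad : ∀ y : Fin n → ℂ, star y ⬝ᵥ (ρ *ᵥ y) = (star y ⬝ᵥ x) * (star x ⬝ᵥ y) := by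
      intro y
      simp only [hρ, dotProduct, Matrix.mulVec, Matrix.vecMulVec_apply, Pi.star_apply,
        Finset.mul_sum, Finset.sum_mul]
      rw [Finset.sum_comm]
      exact Finset.sum_congr rfl fun i _ => Finset.sum_congr rfl fun j _ => by ring
    have ρPSD : ρ.PosSemidef := by
      refine Matrix.PosSemidef.of_dotProduct_mulVec_nonneg ρHerm fun y => ?_
      rw [hquad y, star_dotProduct_comm y x]
      exact star_mul_self_nonneg _
    have hρM : ∀ M : Matrix (Fin n) (Fin n) ℂ, hsInner ρ M = star x ⬝ᵥ (M *ᵥ x) := by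
      intro M
      rw [hsInner, ρHerm]
      simp only [hρ, Matrix.trace, Matrix.diag_apply, Matrix.mul_apply,
        Matrix.vecMulVec_apply, dotProduct, Matrix.mulVec, Pi.star_apply,
        Finset.mul_sum]
      rw [Finset.sum_comm]
      exact Finset.sum_congr rfl fun i _ => Finset.sum_congr rfl fun j _ => by ring
    -- δ ρ is PSD by complete positivity (k = 1)
    have hδρ : (δ ρ).PosSemidef := by
      have hM : (ρ.submatrix (Prod.snd : Fin 1 × Fin n → Fin n) Prod.snd).PosSemidef :=
        ρPSD.submatrix _
      have h2 := hCP 1 _ hM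
      have hamp : amplify δ 1 (ρ.submatrix Prod.snd Prod.snd)
          = (δ ρ).submatrix (Prod.snd : Fin 1 × (Fin n × Fin n) → Fin n × Fin n) Prod.snd := rfl
      rw [hamp] at h2
      have h3 := h2.submatrix (fun a : Fin n × Fin n => ((0 : Fin 1), a))
      simpa [Matrix.submatrix_submatrix, Function.comp] using h3
    obtain ⟨T, hT0, hTr, hBound⟩ := psd_trace_bound hδρ
    set s : ℝ := ∑ i, ‖x i‖ ^ 2 with hs
    have hsx : star x ⬝ᵥ x = (s : ℂ) := by
      rw [hs]
      push_cast
      refine Finset.sum_congr rfl fun i _ => ?_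
      rw [Pi.star_apply, star_mul_self_eq]
    have hs0 : 0 ≤ s := by positivity
    refine ⟨T, s, ?_, hsx, ?_⟩
    · -- the quadratic form of δd 1 is the trace of δ ρ
      have e1 : star x ⬝ᵥ (δd 1 *ᵥ x) = hsInner ρ (δd 1) := (hρM (δd 1)).symm
      have e2 : hsInner ρ (δd 1) = hsInner (δ ρ) 1 := (hadj ρ 1).symm
      have e3 : hsInner (δ ρ) 1 = (δ ρ).trace := by
        rw [hsInner, Matrix.mul_one, hδρ.1]
      rw [e1, e2, e3, hTr]
    · -- s ≤ T via ‖δρ‖² = ‖ρ‖² = s² ≤ T²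
      have i1 : hsInner (δ ρ) (δ ρ) = ((s ^ 2 : ℝ) : ℂ) := by
        rw [key ρ ρ, hρM ρ, hquad x, hsx]
        push_cast
        ring
      rw [i1] at hBound
      have h4 : s ^ 2 ≤ T ^ 2 := by exact_mod_cast hBound
      nlinarith
  refine Matrix.PosSemidef.of_dotProduct_mulVec_nonneg ?_ ?_
  · -- Hermitian
    have h1 : (δd 1).IsHermitian := by
      apply isHermitian_of_real_quadratic
      intro x
      obtain ⟨T, s, hT, _, _⟩ := main x
      rw [hT]
      exact Complex.conj_ofReal T
    exact h1.sub Matrix.isHermitian_one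
  · intro x
    obtain ⟨T, s, hT, hsx, hle⟩ := main x
    rw [Matrix.sub_mulVec, dotProduct_sub, hT, Matrix.one_mulVec, hsx,
      ← Complex.ofReal_sub]
    exact_mod_cast sub_nonneg.mpr hle
end
end

section
/- Let Φ : Mₙ(ℂ) → Mₘ(ℂ) be a completely positive, trace-preserving linear map that is an isometry for the Hilbert–Schmidt inner product (⟨Φ(a), Φ(b)⟩ = ⟨a, b⟩ for all a, b). Then Φ preserves pure states: for every unit vector ψ ∈ ℂⁿ there is a unit vector φ ∈ ℂᵐ with Φ(ψψᴴ) = φφᴴ. -/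
open Matrix Kronecker ComplexOrder

noncomputable section

lemma aux_vecMulVec_posSemidef {n : Type*} [Fintype n] (v : n → ℂ) :
    (vecMulVec v (star v)).PosSemidef := by
  rw [posSemidef_iff_dotProduct_mulVec]
  constructor
  · ext i j
    simp [vecMulVec_apply, conjTranspose_apply, mul_comm]
  · intro x
    have h : star x ⬝ᵥ (vecMulVec v (star v)) *ᵥ x
        = star (star v ⬝ᵥ x) * (star v ⬝ᵥ x) := by
      simp only [dotProduct, mulVec, vecMulVec_apply, Pi.star_apply, star_sum, star_mul',
        Finset.mul_sum, Finset.sum_mul]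
      rw [Finset.sum_comm]
      refine Finset.sum_congr rfl fun i _ => Finset.sum_congr rfl fun j _ => ?_
      simp only [RingHom.map_mul, star_star]
      ring
    rw [h]
    exact star_mul_self_nonneg _


lemma aux_eigen {N : ℕ} (lam : Fin N → ℝ) (hnonneg : ∀ i, 0 ≤ lam i)
    (hsum : ∑ i, lam i = 1) (hsq : ∑ i, lam i ^ 2 = 1) :
    ∃ j, lam j = 1 ∧ ∀ i, i ≠ j → lam i = 0 := by
  have hle : ∀ i, lam i ≤ 1 := by
    intro i
    rw [← hsum]
    exact Finset.single_le_sum (fun i _ => hnonneg i) (Finset.mem_univ i)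
  have hzero : ∑ i, (lam i - lam i ^ 2) = 0 := by
    rw [Finset.sum_sub_distrib, hsum, hsq]; ring
  have heach : ∀ i ∈ Finset.univ, lam i - lam i ^ 2 = 0 :=
    (Finset.sum_eq_zero_iff_of_nonneg (fun i _ => by nlinarith [hnonneg i, hle i])).mp hzero
  have h01 : ∀ i, lam i = 0 ∨ lam i = 1 := by
    intro i
    have h := heach i (Finset.mem_univ i)
    have : lam i * (1 - lam i) = 0 := by nlinarith
    rcases mul_eq_zero.mp this with h | h
    · exact Or.inl h
    · exact Or.inr (by linarith)
  have hex : ∃ j, lam j ≠ 0 := by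
    by_contra h
    push_neg at h
    simp [h] at hsum
  obtain ⟨j, hj⟩ := hex
  have hj1 : lam j = 1 := (h01 j).resolve_left hj
  refine ⟨j, hj1, fun i hi => ?_⟩
  by_contra hi0
  have hi1 : lam i = 1 := (h01 i).resolve_left hi0
  have h2 : (2 : ℝ) ≤ ∑ k, lam k := by
    calc (2:ℝ) = lam i + lam j := by rw [hi1, hj1]; ring
    _ = ∑ k ∈ ({i, j} : Finset (Fin N)), lam k := (Finset.sum_pair hi).symm
    _ ≤ ∑ k, lam k := Finset.sum_le_sum_of_subset_of_nonneg (Finset.subset_univ _)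
        (fun k _ _ => hnonneg k)
  linarith

lemma aux_rankone {m : ℕ} (Q : Matrix (Fin m) (Fin m) ℂ) (hQps : Q.PosSemidef)
    (htrQ : Q.trace = 1) (htrQ2 : (Qᴴ * Q).trace = 1) :
    ∃ φ : Fin m → ℂ, star φ ⬝ᵥ φ = 1 ∧ Q = vecMulVec φ (star φ) := by
  have hQH : Q.IsHermitian := hQps.1
  set U : Matrix (Fin m) (Fin m) ℂ := (hQH.eigenvectorUnitary : Matrix (Fin m) (Fin m) ℂ)
    with hUdef
  set lam := hQH.eigenvalues with hlamdef
  have hU : star U * U = 1 := mem_unitaryGroup_iff'.mp (hQH.eigenvectorUnitary).2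
  have hspec : Q = U * diagonal (RCLike.ofReal ∘ lam) * star U := hQH.spectral_theorem
  have h1 : ∑ i, (lam i : ℂ) = 1 := by
    have := congrArg trace hspec
    rw [htrQ, Matrix.trace_mul_comm, ← Matrix.mul_assoc, hU, Matrix.one_mul,
      Matrix.trace_diagonal] at this
    exact this.symm
  have hQ2 : Qᴴ * Q = U * diagonal (fun i => (lam i : ℂ) ^ 2) * star U := by
    rw [hQH, hspec]
    calc U * diagonal (RCLike.ofReal ∘ lam) * star U *
          (U * diagonal (RCLike.ofReal ∘ lam) * star U)
        = U * diagonal (RCLike.ofReal ∘ lam) * (star U * U) * diagonal (RCLike.ofReal ∘ lam)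
          * star U := by simp only [Matrix.mul_assoc]
      _ = U * (diagonal (RCLike.ofReal ∘ lam) * diagonal (RCLike.ofReal ∘ lam)) * star U := by
          rw [hU]; simp only [Matrix.mul_one, Matrix.mul_assoc]
      _ = U * diagonal (fun i => (lam i : ℂ) ^ 2) * star U := by
          rw [diagonal_mul_diagonal]
          congr 2
          ext i
          simp [sq]
  have h2 : ∑ i, (lam i : ℂ) ^ 2 = 1 := by
    have := congrArg trace hQ2
    rw [htrQ2, Matrix.trace_mul_comm, ← Matrix.mul_assoc, hU, Matrix.one_mul,
      Matrix.trace_diagonal] at this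
    exact this.symm
  have h1r : ∑ i, lam i = 1 := by exact_mod_cast h1
  have h2r : ∑ i, lam i ^ 2 = 1 := by exact_mod_cast h2
  obtain ⟨j, hj1, hj0⟩ := aux_eigen lam (fun i => hQps.eigenvalues_nonneg i) h1r h2r
  have hd : ∀ b, ((lam b : ℂ)) = if b = j then 1 else 0 := by
    intro b
    by_cases h : b = j
    · simp [h, hj1]
    · simp [h, hj0 b h]
  refine ⟨fun i => U i j, ?_, ?_⟩
  · have hval : star (fun i => U i j) ⬝ᵥ (fun i => U i j) = (star U * U) j j := by
      simp [dotProduct, Matrix.mul_apply, Matrix.star_apply]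
    rw [hval, hU, Matrix.one_apply_eq]
  · rw [hspec]
    ext i k
    rw [Matrix.mul_apply]
    have step1 : ∀ b, (U * diagonal (RCLike.ofReal ∘ lam) : Matrix (Fin m) (Fin m) ℂ) i b * star U b k
        = if b = j then U i j * star U j k else 0 := by
      intro b
      rw [Matrix.mul_diagonal]
      by_cases h : b = j
      · subst h
        simp only [Function.comp_apply, if_pos rfl, hj1, RCLike.ofReal_one, mul_one]
        simp
      · simp only [Function.comp_apply, if_neg h, hj0 b h, RCLike.ofReal_zero, mul_zero,
          zero_mul]
    rw [Finset.sum_congr rfl fun b _ => step1 b, Finset.sum_ite_eq' Finset.univ j]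
    simp [vecMulVec_apply, Matrix.star_apply]

/-- A completely positive, trace-preserving, Hilbert-Schmidt-isometric map
preserves pure states. -/
theorem stmt_12 {n m : ℕ}
    (Φ : Matrix (Fin n) (Fin n) ℂ →ₗ[ℂ] Matrix (Fin m) (Fin m) ℂ)
    (hCP : IsCompletelyPositive Φ)
    (htr : ∀ a, (Φ a).trace = a.trace)
    (hiso : ∀ a b, hsInner (Φ a) (Φ b) = hsInner a b) :
    ∀ ψ : Fin n → ℂ, star ψ ⬝ᵥ ψ = 1 →
      ∃ φ : Fin m → ℂ, star φ ⬝ᵥ φ = 1 ∧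
        Φ (vecMulVec ψ (star ψ)) = vecMulVec φ (star φ) := by
  intro ψ hψ
  have hψ' : ∑ k, star (ψ k) * ψ k = 1 := hψ
  set P := vecMulVec ψ (star ψ) with hPdef
  have hP : P.PosSemidef := aux_vecMulVec_posSemidef ψ
  have htrP : P.trace = 1 := by
    simp only [hPdef, trace, diag_apply, vecMulVec_apply, Pi.star_apply]
    rw [← hψ']
    exact Finset.sum_congr rfl fun i _ => mul_comm _ _
  have hPsq : Pᴴ * P = P := by
    rw [hP.1]
    ext i j
    simp only [hPdef, mul_apply, vecMulVec_apply, Pi.star_apply]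
    calc ∑ k, ψ i * star (ψ k) * (ψ k * star (ψ j))
        = (∑ k, star (ψ k) * ψ k) * (ψ i * star (ψ j)) := by
          rw [Finset.sum_mul]
          exact Finset.sum_congr rfl fun k _ => by ring
      _ = ψ i * star (ψ j) := by rw [hψ', one_mul]
  have hQps : (Φ P).PosSemidef := by
    have hA := hCP 1 (P.submatrix Prod.snd Prod.snd) (hP.submatrix _)
    have h2 := hA.submatrix (fun i : Fin m => ((0 : Fin 1), i))
    exact h2
  have htrQ : (Φ P).trace = 1 := by rw [htr, htrP]
  have htrQ2 : ((Φ P)ᴴ * (Φ P)).trace = 1 := by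
    have := hiso P P
    rw [hsInner, hsInner, hPsq, htrP] at this
    exact this
  exact aux_rankone (Φ P) hQps htrQ htrQ2
end
end

section
/- Fix n ≥ 1, let (α i)_{i : Fin (n*n)} be an orthonormal basis of Mₙ(ℂ) for the Hilbert–Schmidt inner product, let δ : Mₙ(ℂ) → M_{n·n}(ℂ) be the unique linear map with δ(α i) = (α i) ⊗ₖ (α i), and let δ† be its Hilbert–Schmidt adjoint. If there is a subset A ⊆ Fin (n*n) with ∑_{i ∈ A} α i = 1 (the identity matrix of Mₙ(ℂ)), then δ†(1) = 1, where the argument 1 is the identity matrix of M_{n·n}(ℂ). -/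
open Matrix Kronecker ComplexOrder

noncomputable section

lemma hsInner_self_eq_zero {m : Type*} [Fintype m] {a : Matrix m m ℂ}
    (h : hsInner a a = 0) : a = 0 := by
  have htr : hsInner a a = ∑ i : m, ∑ j : m, (Complex.normSq (a j i) : ℂ) := by
    simp only [hsInner, Matrix.trace, Matrix.diag, Matrix.mul_apply,
      Matrix.conjTranspose_apply]
    congr 1; ext i; congr 1; ext j
    rw [mul_comm]; exact Complex.mul_conj _
  rw [htr] at h
  have h' : ∑ i : m, ∑ j : m, Complex.normSq (a j i) = 0 := by
    exact_mod_cast h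
  ext j i
  have := (Finset.sum_eq_zero_iff_of_nonneg (fun i _ =>
    Finset.sum_nonneg fun j _ => Complex.normSq_nonneg _)).1 h' i (Finset.mem_univ i)
  have := (Finset.sum_eq_zero_iff_of_nonneg (fun j _ =>
    Complex.normSq_nonneg _)).1 this j (Finset.mem_univ j)
  simpa using Complex.normSq_eq_zero.1 this

/-- If some subset of the basis elements sums to the identity, then δ† is unital. -/
theorem stmt_14 (n : ℕ) (hn : 1 ≤ n)
    (α : Fin (n * n) → Matrix (Fin n) (Fin n) ℂ)
    (horth : ∀ i j, hsInner (α i) (α j) = if i = j then 1 else 0)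
    (hspan : Submodule.span ℂ (Set.range α) = ⊤)
    (δ : Matrix (Fin n) (Fin n) ℂ →ₗ[ℂ] Matrix (Fin n × Fin n) (Fin n × Fin n) ℂ)
    (hδ : ∀ i, δ (α i) = α i ⊗ₖ α i)
    (δd : Matrix (Fin n × Fin n) (Fin n × Fin n) ℂ →ₗ[ℂ] Matrix (Fin n) (Fin n) ℂ)
    (hadj : ∀ a b, hsInner (δ a) b = hsInner a (δd b))
    (A : Finset (Fin (n * n))) (hA : ∑ i ∈ A, α i = 1) :
    δd 1 = 1 := by
  set c : Matrix (Fin n) (Fin n) ℂ := δd 1 - 1 with hc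
  -- trace of (α i)ᴴ equals indicator of membership in A
  have htrα : ∀ i, ((α i)ᴴ).trace = if i ∈ A then 1 else 0 := by
    intro i
    have : hsInner (α i) 1 = ((α i)ᴴ).trace := by
      simp [hsInner]
    rw [← this, ← hA]
    have : hsInner (α i) (∑ j ∈ A, α j) = ∑ j ∈ A, hsInner (α i) (α j) := by
      simp only [hsInner]
      rw [Matrix.mul_sum, Matrix.trace_sum]
    rw [this]
    simp only [horth]
    simp [Finset.sum_ite_eq]
  -- ⟨α i, c⟩ = 0 for all i
  have hkey : ∀ i, hsInner (α i) c = 0 := by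
    intro i
    have h1 : hsInner (α i) (δd 1) = ((α i)ᴴ).trace * ((α i)ᴴ).trace := by
      rw [← hadj, hδ]
      have : hsInner (α i ⊗ₖ α i) 1 = ((α i ⊗ₖ α i)ᴴ).trace := by simp [hsInner]
      rw [this, Matrix.trace_conjTranspose, Matrix.trace_kronecker,
        star_mul', ← Matrix.trace_conjTranspose]
    have h2 : hsInner (α i) c = hsInner (α i) (δd 1) - hsInner (α i) 1 := by
      simp only [hsInner, hc, Matrix.mul_sub, Matrix.trace_sub]
    rw [h2, h1]
    have h3 : hsInner (α i) 1 = ((α i)ᴴ).trace := by simp [hsInner]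
    rw [h3, htrα]
    by_cases h : i ∈ A <;> simp [h]
  -- the linear functional x ↦ trace (cᴴ * x) vanishes everywhere
  let L : Matrix (Fin n) (Fin n) ℂ →ₗ[ℂ] ℂ :=
    (Matrix.traceLinearMap (Fin n) ℂ ℂ).comp (LinearMap.mulLeft ℂ cᴴ)
  have hL : ∀ i, L (α i) = 0 := by
    intro i
    have : L (α i) = star (hsInner (α i) c) := by
      simp only [L, LinearMap.comp_apply, LinearMap.mulLeft_apply,
        Matrix.traceLinearMap_apply, hsInner]
      rw [← Matrix.trace_conjTranspose, Matrix.conjTranspose_mul,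
        Matrix.conjTranspose_conjTranspose]
    rw [this, hkey, star_zero]
  have hLtop : (⊤ : Submodule ℂ (Matrix (Fin n) (Fin n) ℂ)) ≤ LinearMap.ker L := by
    rw [← hspan, Submodule.span_le]
    rintro _ ⟨i, rfl⟩
    exact hL i
  have hcc : hsInner c c = 0 := by
    have : L c = 0 := hLtop (Submodule.mem_top) 
    simpa [L, hsInner] using this
  have := hsInner_self_eq_zero hcc
  rw [hc, sub_eq_zero] at this
  exact this
end
end

section
/- Fix n ≥ 1, let (α i)_{i : Fin (n*n)} be an orthonormal basis of Mₙ(ℂ) for the Hilbert–Schmidt inner product, and let δ : Mₙ(ℂ) → M_{n·n}(ℂ) be the unique linear map with δ(α i) = (α i) ⊗ₖ (α i); assume δ is completely positive. If δ(1) is idempotent (δ(1)·δ(1) = δ(1)), then the set of basis elements is closed under matrix multiplication: for all i, j, the product (α i)·(α j) is either 0 or equal to α k for some k. -/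
open Matrix Kronecker ComplexOrder

noncomputable section

/-! ### Auxiliary lemmas -/

namespace Stmt16Aux

lemma L1 {m : Type*} [Fintype m] (A : Matrix m m ℂ) (v u : m → ℂ) :
    star v ⬝ᵥ (Aᴴ *ᵥ u) = star (star u ⬝ᵥ (A *ᵥ v)) := by
  rw [star_dotProduct]
  congr 1
  rw [star_mulVec, conjTranspose_conjTranspose, ← dotProduct_mulVec]

lemma L2 {m : Type*} [Fintype m] (A B : Matrix m m ℂ) (v w : m → ℂ) :
    star (A *ᵥ v) ⬝ᵥ (B *ᵥ w) = star v ⬝ᵥ ((Aᴴ * B) *ᵥ w) := by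
  rw [star_mulVec, dotProduct_mulVec, vecMul_vecMul, ← dotProduct_mulVec]

lemma star_single {m : Type*} [Fintype m] [DecidableEq m] (p : m) :
    star (Pi.single p (1:ℂ) : m → ℂ) = Pi.single p (1:ℂ) := by
  funext t
  rcases eq_or_ne t p with h | h
  · subst h; simp
  · simp [Pi.single_eq_of_ne h]

lemma entry_quad {m : Type*} [Fintype m] [DecidableEq m] (M : Matrix m m ℂ) (p q : m) :
    star (Pi.single p (1:ℂ) : m → ℂ) ⬝ᵥ (M *ᵥ (Pi.single q (1:ℂ) : m → ℂ)) = M p q := by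
  rw [star_single, single_dotProduct, Matrix.mulVec_single]
  simp

lemma quad_neg (z c : ℂ) (hc : 0 ≤ c)
    (h : ∀ s : ℂ, 0 ≤ s * z + star s * star z + s * star s * c) : z = 0 := by
  by_contra hz
  have hN : 0 < Complex.normSq z := Complex.normSq_pos.2 hz
  have hcre : 0 ≤ c.re := (Complex.le_def.1 hc).1
  have hcim : c.im = 0 := ((Complex.le_def.1 hc).2).symm
  set t : ℝ := 1 / (c.re + 1) with ht
  have hkey := h (-(t : ℂ) * star z)
  have hzz : (starRingEnd ℂ) z * z = (Complex.normSq z : ℂ) := by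
    rw [mul_comm, Complex.mul_conj]
  have hzz2 : z * (starRingEnd ℂ) z = (Complex.normSq z : ℂ) := Complex.mul_conj z
  have hexp : (-(t : ℂ) * star z) * z + star (-(t : ℂ) * star z) * star z
      + (-(t : ℂ) * star z) * star (-(t : ℂ) * star z) * c
      = ((-2 * t * Complex.normSq z : ℝ) : ℂ) + ((t ^ 2 * Complex.normSq z : ℝ) : ℂ) * c := by
    simp only [star_mul', star_neg, RCLike.star_def, Complex.conj_conj, Complex.conj_ofReal]
    push_cast
    linear_combination (-(t : ℂ) + (t : ℂ) ^ 2 * c) * hzz + (-(t : ℂ)) * hzz2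
  rw [hexp] at hkey
  have hre := (Complex.le_def.1 hkey).1
  simp only [Complex.add_re, Complex.ofReal_re, Complex.mul_re, Complex.ofReal_im,
    Complex.zero_re, zero_mul, sub_zero] at hre
  have htpos : 0 < t := by positivity
  have h2 : t * (c.re + 1) = 1 := by rw [ht, one_div, inv_mul_cancel₀ (by linarith)]
  nlinarith [mul_pos htpos hN, mul_pos (mul_pos htpos htpos) hN]

lemma quad_neg2 (z c : ℂ) (hc : 0 ≤ c)
    (h : ∀ s : ℂ, 0 ≤ s * z + star s * star z + c) : z = 0 := by
  by_contra hz
  have hN : 0 < Complex.normSq z := Complex.normSq_pos.2 hz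
  have hcre : 0 ≤ c.re := (Complex.le_def.1 hc).1
  have hcim : c.im = 0 := ((Complex.le_def.1 hc).2).symm
  set t : ℝ := (c.re + 1) / Complex.normSq z with ht
  have hzz : (starRingEnd ℂ) z * z = (Complex.normSq z : ℂ) := by
    rw [mul_comm, Complex.mul_conj]
  have hzz2 : z * (starRingEnd ℂ) z = (Complex.normSq z : ℂ) := Complex.mul_conj z
  have hkey := h (-(t : ℂ) * star z)
  have hexp : (-(t : ℂ) * star z) * z + star (-(t : ℂ) * star z) * star z + c
      = ((-2 * t * Complex.normSq z : ℝ) : ℂ) + c := by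
    simp only [star_mul', star_neg, RCLike.star_def, Complex.conj_conj, Complex.conj_ofReal]
    push_cast
    linear_combination (-(t : ℂ)) * hzz + (-(t : ℂ)) * hzz2
  rw [hexp] at hkey
  have hre := (Complex.le_def.1 hkey).1
  simp only [Complex.add_re, Complex.ofReal_re, Complex.zero_re] at hre
  have htN : t * Complex.normSq z = c.re + 1 := by rw [ht]; exact div_mul_cancel₀ _ hN.ne'
  nlinarith

lemma psd_trace_zero {m : Type*} [Fintype m] [DecidableEq m] (M : Matrix m m ℂ)
    (hM : M.PosSemidef) (ht : M.trace = 0) : M = 0 := by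
  have hnn : ∀ p, 0 ≤ M p p := fun p => by
    rw [← entry_quad M p p]; exact hM.dotProduct_mulVec_nonneg _
  have hdiag : ∀ p, M p p = 0 := by
    intro p
    have hsum : ∑ p, M p p = 0 := ht
    exact (Finset.sum_eq_zero_iff_of_nonneg (fun i _ => hnn i)).1 hsum p (Finset.mem_univ p)
  ext q p
  have h0 : M *ᵥ (Pi.single p 1 : m → ℂ) = 0 :=
    (hM.dotProduct_mulVec_zero_iff _).1 (by rw [entry_quad]; exact hdiag p)
  have := congrFun h0 q
  rw [Matrix.mulVec_single] at this
  simpa using this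

variable {n : ℕ}

lemma gram_psd (x : Fin 3 → Matrix (Fin n) (Fin n) ℂ) :
    (Matrix.of fun (ip jq : Fin 3 × Fin n) => ((x ip.1)ᴴ * x jq.1) ip.2 jq.2).PosSemidef := by
  have h : (Matrix.of fun (ip jq : Fin 3 × Fin n) => ((x ip.1)ᴴ * x jq.1) ip.2 jq.2) =
      (Matrix.of fun (ip jq : Fin 3 × Fin n) =>
        if ip.1 = 0 then (x jq.1) ip.2 jq.2 else 0)ᴴ *
      (Matrix.of fun (ip jq : Fin 3 × Fin n) =>
        if ip.1 = 0 then (x jq.1) ip.2 jq.2 else 0) := by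
    ext ⟨i, p⟩ ⟨j, q⟩
    simp [Matrix.mul_apply, Matrix.conjTranspose_apply, Fintype.sum_prod_type,
      apply_ite (star : ℂ → ℂ), ite_mul, mul_ite, Finset.sum_ite_eq']
  rw [h]
  exact posSemidef_conjTranspose_mul_self _

lemma dot_block {P : Type*} [Fintype P] (C : Fin 3 → Fin 3 → Matrix P P ℂ) (ξ : Fin 3 → P → ℂ) :
    (star fun ip : Fin 3 × P => ξ ip.1 ip.2) ⬝ᵥ
      ((Matrix.of fun (ip jq : Fin 3 × P) => C ip.1 jq.1 ip.2 jq.2) *ᵥ fun ip => ξ ip.1 ip.2) =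
    ∑ i, ∑ j, star (ξ i) ⬝ᵥ (C i j *ᵥ ξ j) := by
  simp only [dotProduct, mulVec, Matrix.of_apply, Pi.star_apply, Fintype.sum_prod_type,
    Finset.mul_sum]
  exact Finset.sum_congr rfl fun i _ => Finset.sum_comm

lemma cp3 (δ : Matrix (Fin n) (Fin n) ℂ →ₗ[ℂ] Matrix (Fin n × Fin n) (Fin n × Fin n) ℂ)
    (hCP : IsCompletelyPositive δ) (x : Fin 3 → Matrix (Fin n) (Fin n) ℂ)
    (ξ : Fin 3 → (Fin n × Fin n) → ℂ) :
    0 ≤ ∑ i, ∑ j, star (ξ i) ⬝ᵥ (δ ((x i)ᴴ * x j) *ᵥ ξ j) := by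
  have hN := hCP 3 _ (gram_psd x)
  have h2 := hN.dotProduct_mulVec_nonneg (fun ip => ξ ip.1 ip.2)
  calc (0:ℂ) ≤ _ := h2
  _ = ∑ i, ∑ j, star (ξ i) ⬝ᵥ (δ ((x i)ᴴ * x j) *ᵥ ξ j) :=
    dot_block (fun i j => δ ((x i)ᴴ * x j)) ξ

lemma herm (δ : Matrix (Fin n) (Fin n) ℂ →ₗ[ℂ] Matrix (Fin n × Fin n) (Fin n × Fin n) ℂ)
    (hCP : IsCompletelyPositive δ) (a : Matrix (Fin n) (Fin n) ℂ) :
    δ aᴴ = (δ a)ᴴ := by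
  have hN := hCP 3 _ (gram_psd ![1, a, 0])
  have hherm := hN.1
  ext pq rs
  have h := hherm.apply ((1 : Fin 3), pq) ((0 : Fin 3), rs)
  simp only [amplify, Matrix.of_apply, Matrix.cons_val_zero, Matrix.cons_val_one,
    Matrix.head_cons, conjTranspose_one, one_mul, mul_one] at h
  simp only [conjTranspose_apply]
  exact h.symm

lemma master0 (δ : Matrix (Fin n) (Fin n) ℂ →ₗ[ℂ] Matrix (Fin n × Fin n) (Fin n × Fin n) ℂ)
    (hCP : IsCompletelyPositive δ) (x : Matrix (Fin n) (Fin n) ℂ)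
    (v ξ : (Fin n × Fin n) → ℂ) :
    0 ≤ star v ⬝ᵥ (δ 1 *ᵥ v) + star v ⬝ᵥ (δ x *ᵥ ξ) + star ξ ⬝ᵥ (δ xᴴ *ᵥ v)
      + star ξ ⬝ᵥ (δ (xᴴ * x) *ᵥ ξ) := by
  have h := cp3 δ hCP ![1, x, 0] ![v, ξ, 0]
  simp only [Fin.sum_univ_three, Matrix.cons_val_zero, Matrix.cons_val_one, Matrix.head_cons,
    Matrix.cons_val_two, Matrix.tail_cons, conjTranspose_one, one_mul, mul_one,
    conjTranspose_zero, zero_mul, mul_zero, map_zero, Matrix.zero_mulVec, dotProduct_zero,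
    star_zero, zero_dotProduct, Matrix.mulVec_zero, add_zero, zero_add] at h
  convert h using 1
  ring

lemma master (δ : Matrix (Fin n) (Fin n) ℂ →ₗ[ℂ] Matrix (Fin n × Fin n) (Fin n × Fin n) ℂ)
    (hCP : IsCompletelyPositive δ)
    (habs : ∀ y, δ 1 * δ y = δ y)
    (hherm : ∀ y, δ yᴴ = (δ y)ᴴ)
    (a b : Matrix (Fin n) (Fin n) ℂ) (v w : (Fin n × Fin n) → ℂ) :
    0 ≤ star v ⬝ᵥ ((δ (aᴴ * a) - (δ a)ᴴ * δ a) *ᵥ v)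
      + star v ⬝ᵥ ((δ (aᴴ * b) - (δ a)ᴴ * δ b) *ᵥ w)
      + star w ⬝ᵥ ((δ (bᴴ * a) - (δ b)ᴴ * δ a) *ᵥ v)
      + star w ⬝ᵥ ((δ (bᴴ * b) - (δ b)ᴴ * δ b) *ᵥ w) := by
  have hP : (δ 1)ᴴ = δ 1 := by rw [← hherm, conjTranspose_one]
  have h := cp3 δ hCP ![1, a, b] ![-(δ a *ᵥ v + δ b *ᵥ w), v, w]
  simp only [Fin.sum_univ_three, Matrix.cons_val_zero, Matrix.cons_val_one, Matrix.head_cons,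
    Matrix.cons_val_two, Matrix.tail_cons, conjTranspose_one, one_mul, mul_one,
    hherm, star_neg, neg_dotProduct, dotProduct_neg, Matrix.mulVec_neg, Matrix.mulVec_add,
    star_add, add_dotProduct, dotProduct_add, Matrix.mulVec_mulVec, habs, L2, hP] at h
  simp only [Matrix.sub_mulVec, dotProduct_sub, Matrix.mulVec_mulVec]
  convert h using 1
  ring

lemma absorb (δ : Matrix (Fin n) (Fin n) ℂ →ₗ[ℂ] Matrix (Fin n × Fin n) (Fin n × Fin n) ℂ)
    (hCP : IsCompletelyPositive δ)
    (hherm : ∀ y, δ yᴴ = (δ y)ᴴ)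
    (hid : δ 1 * δ 1 = δ 1) (x : Matrix (Fin n) (Fin n) ℂ) :
    δ 1 * δ x = δ x := by
  have hP : (δ 1)ᴴ = δ 1 := by rw [← hherm, conjTranspose_one]
  have key : (1 - δ 1) * δ x = 0 := by
    ext pq rs
    have hsingle : star (Pi.single pq (1:ℂ) : (Fin n × Fin n) → ℂ) = Pi.single pq (1:ℂ) :=
      star_single pq
    let e : (Fin n × Fin n) → ℂ := Pi.single rs 1
    let v : (Fin n × Fin n) → ℂ := (1 - δ 1) *ᵥ Pi.single pq 1
    have hPv : δ 1 *ᵥ v = 0 := by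
      show δ 1 *ᵥ ((1 - δ 1) *ᵥ Pi.single pq 1) = 0
      rw [Matrix.mulVec_mulVec, mul_sub, mul_one, hid, sub_self, Matrix.zero_mulVec]
    have hzval : star v ⬝ᵥ (δ x *ᵥ e) = ((1 - δ 1) * δ x) pq rs := by
      show star ((1 - δ 1) *ᵥ Pi.single pq 1) ⬝ᵥ (δ x *ᵥ Pi.single rs 1) = _
      rw [L2, conjTranspose_sub, conjTranspose_one, hP, hsingle,
        single_dotProduct, Matrix.mulVec_single, one_mul]
      simp
    have hc : 0 ≤ star e ⬝ᵥ (δ (xᴴ * x) *ᵥ e) := by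
      have h := master0 δ hCP x 0 e
      simpa using h
    have hzero : star v ⬝ᵥ (δ x *ᵥ e) = 0 := by
      apply quad_neg _ _ hc
      intro s
      have h := master0 δ hCP x v (s • e)
      rw [hPv, dotProduct_zero] at h
      rw [Matrix.mulVec_smul, dotProduct_smul] at h
      rw [star_smul, smul_dotProduct, smul_dotProduct] at h
      rw [hherm, L1] at h
      rw [Matrix.mulVec_smul, dotProduct_smul] at h
      convert h using 1
      simp only [smul_eq_mul]
      ring
    rw [hzval] at hzero
    simpa using hzero
  have h := sub_mul (1 : Matrix (Fin n × Fin n) (Fin n × Fin n) ℂ) (δ 1) (δ x)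
  rw [key, one_mul] at h
  exact (sub_eq_zero.mp h.symm).symm

lemma schwarz (δ : Matrix (Fin n) (Fin n) ℂ →ₗ[ℂ] Matrix (Fin n × Fin n) (Fin n × Fin n) ℂ)
    (hCP : IsCompletelyPositive δ)
    (habs : ∀ y, δ 1 * δ y = δ y)
    (hherm : ∀ y, δ yᴴ = (δ y)ᴴ)
    (y : Matrix (Fin n) (Fin n) ℂ) (w : (Fin n × Fin n) → ℂ) :
    0 ≤ star w ⬝ᵥ ((δ (yᴴ * y) - (δ y)ᴴ * δ y) *ᵥ w) := by
  have h := master δ hCP habs hherm y 0 w 0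
  simpa using h

lemma hsInner_sum_sum {m ι : Type*} [Fintype m] [Fintype ι] (c d : ι → ℂ)
    (f g : ι → Matrix m m ℂ) :
    hsInner (∑ k, c k • f k) (∑ l, d l • g l)
      = ∑ k, ∑ l, star (c k) * d l * hsInner (f k) (g l) := by
  simp only [hsInner, Matrix.conjTranspose_sum, Matrix.conjTranspose_smul, Matrix.sum_mul,
    Matrix.mul_sum, Matrix.smul_mul, Matrix.mul_smul, Matrix.trace_sum, Matrix.trace_smul,
    smul_smul, smul_eq_mul, RCLike.star_def]
  rw [Finset.sum_comm]
  refine Finset.sum_congr rfl fun k _ => ?_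
  rw [Finset.mul_sum]
  exact Finset.sum_congr rfl fun l _ => by ring

lemma hsInner_sum {m ι : Type*} [Fintype m] [Fintype ι] (a : Matrix m m ℂ) (d : ι → ℂ)
    (g : ι → Matrix m m ℂ) :
    hsInner a (∑ l, d l • g l) = ∑ l, d l * hsInner a (g l) := by
  simp only [hsInner, Matrix.mul_sum, Matrix.mul_smul, Matrix.trace_sum, Matrix.trace_smul,
    smul_eq_mul]

lemma hsInner_sum' {m ι : Type*} [Fintype m] [Fintype ι] (a : Matrix m m ℂ)
    (g : ι → Matrix m m ℂ) :
    hsInner a (∑ l, g l) = ∑ l, hsInner a (g l) := by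
  simp only [hsInner, Matrix.mul_sum, Matrix.trace_sum]

lemma kron_conjTranspose (a b : Matrix (Fin n) (Fin n) ℂ) :
    (a ⊗ₖ b)ᴴ = aᴴ ⊗ₖ bᴴ := by
  ext ⟨i, j⟩ ⟨k, l⟩
  simp [Matrix.conjTranspose_apply, Matrix.kroneckerMap_apply, star_mul', mul_comm]

lemma hsInner_kron (a b c d : Matrix (Fin n) (Fin n) ℂ) :
    hsInner (a ⊗ₖ b) (c ⊗ₖ d) = hsInner a c * hsInner b d := by
  rw [hsInner, kron_conjTranspose, ← Matrix.mul_kronecker_mul, Matrix.trace_kronecker,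
    hsInner, hsInner]

lemma kron_sum_sum {ι : Type*} [Fintype ι] (c d : ι → ℂ)
    (f g : ι → Matrix (Fin n) (Fin n) ℂ) :
    (∑ k, c k • f k) ⊗ₖ (∑ l, d l • g l)
      = ∑ k, ∑ l, (c k * d l) • (f k ⊗ₖ g l) := by
  ext ⟨a, b⟩ ⟨a', b'⟩
  simp only [Matrix.kroneckerMap_apply, Matrix.sum_apply, Matrix.smul_apply, smul_eq_mul]
  rw [Finset.sum_mul_sum]
  refine Finset.sum_congr rfl fun k _ => Finset.sum_congr rfl fun l _ => by ring

lemma expand (α : Fin (n * n) → Matrix (Fin n) (Fin n) ℂ)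
    (horth : ∀ i j, hsInner (α i) (α j) = if i = j then 1 else 0)
    (hspan : Submodule.span ℂ (Set.range α) = ⊤)
    (x : Matrix (Fin n) (Fin n) ℂ) : x = ∑ i, hsInner (α i) x • α i := by
  let T : Matrix (Fin n) (Fin n) ℂ →ₗ[ℂ] Matrix (Fin n) (Fin n) ℂ :=
    { toFun := fun x => ∑ i, hsInner (α i) x • α i
      map_add' := by
        intro x y
        simp only [hsInner, Matrix.mul_add, Matrix.trace_add, add_smul,
          Finset.sum_add_distrib]
      map_smul' := by
        intro c x
        simp only [hsInner, Matrix.mul_smul, Matrix.trace_smul, smul_eq_mul, RingHom.id_apply,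
          Finset.smul_sum, smul_smul] }
  have hT : T = LinearMap.id := by
    apply LinearMap.ext_on hspan
    rintro y ⟨j, rfl⟩
    show (∑ i, hsInner (α i) (α j) • α i) = α j
    simp only [horth]
    simp [ite_smul]
  have := congrArg (fun f => f x) hT
  exact (this : (∑ i, hsInner (α i) x • α i) = x).symm

lemma complete (α : Fin (n * n) → Matrix (Fin n) (Fin n) ℂ)
    (horth : ∀ i j, hsInner (α i) (α j) = if i = j then 1 else 0)
    (hspan : Submodule.span ℂ (Set.range α) = ⊤)
    (p q r s : Fin n) :
    ∑ i, star (α i r s) * α i p q = if r = p ∧ s = q then 1 else 0 := by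
  have h := expand α horth hspan (Matrix.single r s 1)
  have hinner : ∀ i, hsInner (α i) (Matrix.single r s 1) = star (α i r s) := by
    intro i
    simp [hsInner, Matrix.trace, Matrix.diag, Matrix.mul_apply, Matrix.single,
      Matrix.conjTranspose_apply, Finset.sum_ite_eq, ite_and]
  simp only [hinner] at h
  calc ∑ i, star (α i r s) * α i p q
      = (∑ i, star (α i r s) • α i) p q := by simp [Matrix.sum_apply]
    _ = Matrix.single r s 1 p q := by rw [← h]
    _ = if r = p ∧ s = q then 1 else 0 := by simp [Matrix.single]

lemma sum_mul_conj (α : Fin (n * n) → Matrix (Fin n) (Fin n) ℂ)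
    (horth : ∀ i j, hsInner (α i) (α j) = if i = j then 1 else 0)
    (hspan : Submodule.span ℂ (Set.range α) = ⊤) :
    ∑ i, α i * (α i)ᴴ = (n : ℂ) • 1 := by
  ext p r
  rw [Matrix.sum_apply]
  simp only [Matrix.mul_apply, Matrix.conjTranspose_apply]
  rw [Finset.sum_comm]
  have : ∀ q : Fin n, ∑ i, α i p q * star (α i r q) = if r = p then 1 else 0 := by
    intro q
    have h := complete α horth hspan p q r q
    simp only [and_true] at h
    rw [← h]
    exact Finset.sum_congr rfl fun i _ => by ring
  rw [Finset.sum_congr rfl fun q _ => this q]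
  rcases eq_or_ne r p with h | h
  · simp [h, Matrix.one_apply]
  · simp [h, Matrix.one_apply, Ne.symm h]

lemma traceP (α : Fin (n * n) → Matrix (Fin n) (Fin n) ℂ)
    (horth : ∀ i j, hsInner (α i) (α j) = if i = j then 1 else 0)
    (hspan : Submodule.span ℂ (Set.range α) = ⊤)
    (δ : Matrix (Fin n) (Fin n) ℂ →ₗ[ℂ] Matrix (Fin n × Fin n) (Fin n × Fin n) ℂ)
    (hδ : ∀ i, δ (α i) = α i ⊗ₖ α i)
    (hherm : ∀ y, δ yᴴ = (δ y)ᴴ)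
    (hid : δ 1 * δ 1 = δ 1) :
    (δ 1).trace = (n : ℂ) := by
  have hP : (δ 1)ᴴ = δ 1 := by rw [← hherm, conjTranspose_one]
  set c : Fin (n * n) → ℂ := fun k => hsInner (α k) 1 with hc
  have h1 : (1 : Matrix (Fin n) (Fin n) ℂ) = ∑ k, c k • α k := expand α horth hspan 1
  have hδ1 : δ 1 = ∑ k, c k • (α k ⊗ₖ α k) := by
    conv_lhs => rw [h1]
    rw [map_sum]
    exact Finset.sum_congr rfl fun k _ => (δ.map_smul (c k) (α k)).trans (by rw [hδ])
  have hsum : ∑ k, star (c k) * c k = (n : ℂ) := by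
    have h2 : hsInner (1 : Matrix (Fin n) (Fin n) ℂ) 1
        = ∑ k, ∑ l, star (c k) * c l * hsInner (α k) (α l) := by
      rw [h1]
      exact hsInner_sum_sum c c α α
    have h3 : hsInner (1 : Matrix (Fin n) (Fin n) ℂ) 1 = (n : ℂ) := by
      simp [hsInner, Matrix.trace_one]
    rw [h3] at h2
    have h4 : ∑ k, ∑ l, star (c k) * c l * hsInner (α k) (α l) = ∑ k, star (c k) * c k := by
      refine Finset.sum_congr rfl fun k _ => ?_
      rw [Finset.sum_eq_single k]
      · rw [horth, if_pos rfl, mul_one]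
      · intro l _ hlk
        rw [horth, if_neg (Ne.symm hlk), mul_zero]
      · intro hk; exact absurd (Finset.mem_univ k) hk
    rw [← h4]
    exact h2.symm
  calc (δ 1).trace = ((δ 1)ᴴ * δ 1).trace := by rw [hP, hid]
    _ = hsInner (δ 1) (δ 1) := rfl
    _ = ∑ k, ∑ l, star (c k) * c l * hsInner (α k ⊗ₖ α k) (α l ⊗ₖ α l) := by
        rw [hδ1]; exact hsInner_sum_sum c c _ _
    _ = ∑ k, star (c k) * c k := by
        refine Finset.sum_congr rfl fun k _ => ?_
        rw [Finset.sum_eq_single k]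
        · rw [hsInner_kron, horth, if_pos rfl, mul_one, mul_one]
        · intro l _ hlk
          rw [hsInner_kron, horth, if_neg (Ne.symm hlk), mul_zero, mul_zero]
        · intro hk; exact absurd (Finset.mem_univ k) hk
    _ = (n : ℂ) := hsum

end Stmt16Aux

open Stmt16Aux

/-- If δ is completely positive and δ(1) is idempotent, then the basis elements
are closed under matrix multiplication. -/
theorem stmt_16 (n : ℕ) (hn : 1 ≤ n)
    (α : Fin (n * n) → Matrix (Fin n) (Fin n) ℂ)
    (horth : ∀ i j, hsInner (α i) (α j) = if i = j then 1 else 0)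
    (hspan : Submodule.span ℂ (Set.range α) = ⊤)
    (δ : Matrix (Fin n) (Fin n) ℂ →ₗ[ℂ] Matrix (Fin n × Fin n) (Fin n × Fin n) ℂ)
    (hδ : ∀ i, δ (α i) = α i ⊗ₖ α i)
    (hCP : IsCompletelyPositive δ)
    (hid : δ 1 * δ 1 = δ 1) :
    ∀ i j, α i * α j = 0 ∨ ∃ k, α i * α j = α k := by
  have hherm : ∀ y, δ yᴴ = (δ y)ᴴ := herm δ hCP
  have habs : ∀ y, δ 1 * δ y = δ y := absorb δ hCP hherm hid
  -- Step 1: D i := δ(αᵢαᵢᴴ) - δ(αᵢ)δ(αᵢ)ᴴ is PSD with total trace zero, hence zero.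
  set D : Fin (n * n) → Matrix (Fin n × Fin n) (Fin n × Fin n) ℂ :=
    fun i => δ (α i * (α i)ᴴ) - δ (α i) * (δ (α i))ᴴ with hD
  have hquad : ∀ i w, 0 ≤ star w ⬝ᵥ (D i *ᵥ w) := by
    intro i w
    have h := schwarz δ hCP habs hherm ((α i)ᴴ) w
    rw [conjTranspose_conjTranspose] at h
    rw [hherm, conjTranspose_conjTranspose] at h
    exact h
  have hhermD : ∀ i, (D i).IsHermitian := by
    intro i
    unfold D
    unfold Matrix.IsHermitian
    rw [conjTranspose_sub, conjTranspose_mul, conjTranspose_conjTranspose,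
      ← hherm, conjTranspose_mul, conjTranspose_conjTranspose]
  have htr1 : ∑ i, (δ (α i * (α i)ᴴ)).trace = (n : ℂ) * (n : ℂ) := by
    rw [← Matrix.trace_sum, ← map_sum, sum_mul_conj α horth hspan, _root_.map_smul,
      Matrix.trace_smul, traceP α horth hspan δ hδ hherm hid]
    simp
  have htr2 : ∑ i, (δ (α i) * (δ (α i))ᴴ).trace = (n : ℂ) * (n : ℂ) := by
    have : ∀ i, (δ (α i) * (δ (α i))ᴴ).trace = 1 := by
      intro i
      rw [hδ, kron_conjTranspose, ← Matrix.mul_kronecker_mul, Matrix.trace_kronecker]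
      have : (α i * (α i)ᴴ).trace = 1 := by
        rw [Matrix.trace_mul_comm]
        have := horth i i
        rw [if_pos rfl] at this
        exact this
      rw [this, mul_one]
    rw [Finset.sum_congr rfl fun i _ => this i]
    simp [Finset.card_univ]
  have htrsum : ∑ i, (D i).trace = 0 := by
    unfold D
    simp only [Matrix.trace_sub, Finset.sum_sub_distrib]
    rw [htr1, htr2, sub_self]
  have htrnn : ∀ i, 0 ≤ (D i).trace := by
    intro i
    have : (D i).trace = ∑ p, D i p p := rfl
    rw [this]
    refine Finset.sum_nonneg fun p _ => ?_
    rw [← entry_quad (D i) p p]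
    exact hquad i _
  have htreach : ∀ i, (D i).trace = 0 := by
    intro i
    exact (Finset.sum_eq_zero_iff_of_nonneg (fun i _ => htrnn i)).1 htrsum i (Finset.mem_univ i)
  have hDzero : ∀ i, D i = 0 := by
    intro i
    exact psd_trace_zero _ (.of_dotProduct_mulVec_nonneg (hhermD i) (hquad i)) (htreach i)
  -- Step 2: multiplicativity δ(αᵢ b) = δ(αᵢ) δ(b)
  have hmult : ∀ i (b : Matrix (Fin n) (Fin n) ℂ), δ (α i * b) = δ (α i) * δ b := by
    intro i b
    have hS : δ (α i * b) - δ (α i) * δ b = 0 := by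
      ext pq rs
      have hc : 0 ≤ star (Pi.single rs (1:ℂ) : (Fin n × Fin n) → ℂ) ⬝ᵥ
          ((δ (bᴴ * b) - (δ b)ᴴ * δ b) *ᵥ (Pi.single rs (1:ℂ) : (Fin n × Fin n) → ℂ)) :=
        schwarz δ hCP habs hherm b _
      have hz : (δ (α i * b) - δ (α i) * δ b) pq rs = 0 := by
        rw [← entry_quad (δ (α i * b) - δ (α i) * δ b) pq rs]
        apply quad_neg2 _ _ hc
        intro s
        have h := master δ hCP habs hherm ((α i)ᴴ) b
          (star s • (Pi.single pq (1:ℂ) : (Fin n × Fin n) → ℂ))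
          (Pi.single rs (1:ℂ) : (Fin n × Fin n) → ℂ)
        -- rewrite the a-terms using hDzero
        rw [conjTranspose_conjTranspose] at h
        rw [hherm, conjTranspose_conjTranspose] at h
        have hDa : δ (α i * (α i)ᴴ) - δ (α i) * (δ (α i))ᴴ = 0 := hDzero i
        rw [hDa, Matrix.zero_mulVec, dotProduct_zero] at h
        -- third term: δ(bᴴ αᵢᴴ) - (δ b)ᴴ δ(αᵢᴴ) = (δ(αᵢ b) - δ(αᵢ) δ b)ᴴ
        have hadj : δ (bᴴ * (α i)ᴴ) - (δ b)ᴴ * (δ (α i))ᴴ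
            = (δ (α i * b) - δ (α i) * δ b)ᴴ := by
          simp only [conjTranspose_sub, conjTranspose_mul, ← hherm]
        rw [hadj] at h
        rw [star_smul, star_star, smul_dotProduct] at h
        rw [Matrix.mulVec_smul, dotProduct_smul] at h
        rw [L1] at h
        convert h using 1
        simp only [smul_eq_mul]
        ring
      exact hz
    exact sub_eq_zero.mp hS
  -- Step 3: coefficient analysis
  intro i j
  have hmm : δ (α i * α j) = (α i * α j) ⊗ₖ (α i * α j) := by
    rw [hmult i (α j), hδ, hδ, ← Matrix.mul_kronecker_mul]
  set c : Fin (n * n) → ℂ := fun k => hsInner (α k) (α i * α j) with hcdef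
  have hm : α i * α j = ∑ k, c k • α k := expand α horth hspan _
  have hδm : δ (α i * α j) = ∑ k, c k • (α k ⊗ₖ α k) := by
    conv_lhs => rw [hm]
    rw [map_sum]
    exact Finset.sum_congr rfl fun k _ => (δ.map_smul (c k) (α k)).trans (by rw [hδ])
  have hkron : (α i * α j) ⊗ₖ (α i * α j) = ∑ k, ∑ l, (c k * c l) • (α k ⊗ₖ α l) := by
    conv_lhs => rw [hm]
    exact kron_sum_sum c c α α
  have hcc : ∀ k l, c k * c l = if k = l then c k else 0 := by
    intro k l
    have heq : (∑ a, c a • (α a ⊗ₖ α a)) = ∑ a, ∑ b, (c a * c b) • (α a ⊗ₖ α b) := by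
      rw [← hδm, hmm, hkron]
    have hA : hsInner (α k ⊗ₖ α l) (∑ a, c a • (α a ⊗ₖ α a)) = if k = l then c k else 0 := by
      rw [hsInner_sum]
      simp only [hsInner_kron, horth]
      rcases eq_or_ne k l with hkl | hkl
      · subst hkl
        rw [if_pos rfl, Finset.sum_eq_single k]
        · simp
        · intro b _ hbk; simp [Ne.symm hbk]
        · intro hk; exact absurd (Finset.mem_univ k) hk
      · rw [if_neg hkl]
        apply Finset.sum_eq_zero
        intro a _
        rcases eq_or_ne k a with hka | hka
        · subst hka; simp [Ne.symm hkl]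
        · simp [hka]
    have hB : hsInner (α k ⊗ₖ α l) (∑ a, ∑ b, (c a * c b) • (α a ⊗ₖ α b)) = c k * c l := by
      rw [hsInner_sum']
      have hin : ∀ a, hsInner (α k ⊗ₖ α l) (∑ b, (c a * c b) • (α a ⊗ₖ α b))
          = ∑ b, (c a * c b) * (hsInner (α k) (α a) * hsInner (α l) (α b)) := by
        intro a
        rw [hsInner_sum]
        simp only [hsInner_kron]
      rw [Finset.sum_congr rfl fun a _ => hin a]
      simp only [horth]
      rw [Finset.sum_eq_single k]
      · rw [Finset.sum_eq_single l]
        · simp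
        · intro b _ hbl; simp [Ne.symm hbl]
        · intro hl; exact absurd (Finset.mem_univ l) hl
      · intro a _ hak
        apply Finset.sum_eq_zero
        intro b _
        simp [Ne.symm hak]
      · intro hk; exact absurd (Finset.mem_univ k) hk
    rw [← hA, ← hB]
    rw [heq]
  by_cases hz : ∀ k, c k = 0
  · left
    rw [hm]
    apply Finset.sum_eq_zero
    intro k _
    rw [hz k, zero_smul]
  · right
    push_neg at hz
    obtain ⟨k₀, hk₀⟩ := hz
    refine ⟨k₀, ?_⟩
    have hck1 : c k₀ = 1 := by
      have := hcc k₀ k₀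
      rw [if_pos rfl] at this
      have h2 : c k₀ * (c k₀ - 1) = 0 := by ring_nf; linear_combination this
      rcases mul_eq_zero.mp h2 with h | h
      · exact absurd h hk₀
      · exact sub_eq_zero.mp h
    have hcl0 : ∀ l, l ≠ k₀ → c l = 0 := by
      intro l hl
      have := hcc k₀ l
      rw [if_neg (Ne.symm hl)] at this
      rcases mul_eq_zero.mp this with h | h
      · exact absurd h hk₀
      · exact h
    rw [hm]
    rw [Finset.sum_eq_single k₀]
    · rw [hck1, one_smul]
    · intro l _ hl
      rw [hcl0 l hl, zero_smul]
    · intro hk; exact absurd (Finset.mem_univ k₀) hk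
end
end

section
/- Fix n ≥ 1, let (α i)_{i : Fin (n*n)} be an orthonormal basis of Mₙ(ℂ) for the Hilbert–Schmidt inner product, and let δ : Mₙ(ℂ) → M_{n·n}(ℂ) be the unique linear map with δ(α i) = (α i) ⊗ₖ (α i). If the basis is canonical — there exists an orthonormal basis (e i) of ℂⁿ with {α k : k} = {(e i)(e j)ᴴ : i, j} as sets of matrices — then δ(1) is idempotent: δ(1)·δ(1) = δ(1). -/
open Matrix Kronecker ComplexOrder

noncomputable section

/-- If the basis is canonical, built from an orthonormal basis (e i) of ℂⁿ, then
δ(1) is idempotent. -/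
theorem stmt_17 (n : ℕ) (hn : 1 ≤ n)
    (α : Fin (n * n) → Matrix (Fin n) (Fin n) ℂ)
    (horth : ∀ i j, hsInner (α i) (α j) = if i = j then 1 else 0)
    (hspan : Submodule.span ℂ (Set.range α) = ⊤)
    (δ : Matrix (Fin n) (Fin n) ℂ →ₗ[ℂ] Matrix (Fin n × Fin n) (Fin n × Fin n) ℂ)
    (hδ : ∀ i, δ (α i) = α i ⊗ₖ α i)
    (e : Fin n → Fin n → ℂ)
    (he : ∀ i j, star (e i) ⬝ᵥ e j = if i = j then 1 else 0)
    (hcanon : Set.range α =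
      Set.range fun p : Fin n × Fin n => vecMulVec (e p.1) (star (e p.2))) :
    δ 1 * δ 1 = δ 1 := by
  -- abbreviate the canonical rank-one matrices
  set E : Fin n × Fin n → Matrix (Fin n) (Fin n) ℂ :=
    fun p => vecMulVec (e p.1) (star (e p.2)) with hE
  -- δ acts diagonally on the canonical matrices
  have hEδ : ∀ p : Fin n × Fin n, δ (E p) = E p ⊗ₖ E p := by
    intro p
    have : E p ∈ Set.range α := by
      rw [hcanon]; exact ⟨p, rfl⟩
    obtain ⟨k, hk⟩ := this
    rw [← hk, hδ]
  -- product rule for rank-one matrices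
  have hmul : ∀ p q : Fin n, E (p, p) * E (q, q) =
      (if p = q then (1 : ℂ) else 0) • E (p, q) := by
    intro p q
    rw [← he p q]
    ext a b
    simp only [hE, Matrix.mul_apply, vecMulVec_apply, Matrix.smul_apply,
      dotProduct, Pi.star_apply, smul_eq_mul, Finset.sum_mul]
    apply Finset.sum_congr rfl
    intro c _
    ring
  -- identity decomposition
  have hone : (1 : Matrix (Fin n) (Fin n) ℂ) = ∑ p : Fin n, E (p, p) := by
    set U : Matrix (Fin n) (Fin n) ℂ := Matrix.of fun p a => e p a with hU
    have hUU : U * Uᴴ = 1 := by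
      ext p q
      have h1 := he p q
      simp only [dotProduct, Pi.star_apply] at h1
      simp only [Matrix.mul_apply, Matrix.conjTranspose_apply, hU, Matrix.of_apply,
        Matrix.one_apply]
      have h2 : ∑ x : Fin n, e p x * star (e q x)
          = star (∑ x : Fin n, star (e p x) * e q x) := by
        simp only [star_sum, star_mul', star_star]
      rw [h2, h1]
      simp [apply_ite]
    have hUU' : Uᴴ * U = 1 := mul_eq_one_comm.mp hUU
    ext a b
    have h2 := congrArg (fun M => M a b) hUU'
    simp only [Matrix.mul_apply, Matrix.conjTranspose_apply, hU, Matrix.of_apply,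
      Matrix.one_apply] at h2
    have h4 := congrArg star h2
    simp only [star_sum, star_mul', star_star] at h4
    simp only [Matrix.sum_apply, hE, vecMulVec_apply, Pi.star_apply, Matrix.one_apply]
    rw [h4]
    simp [apply_ite]
  -- compute δ 1
  have hδ1 : δ 1 = ∑ p : Fin n, E (p, p) ⊗ₖ E (p, p) := by
    rw [hone, map_sum]
    exact Finset.sum_congr rfl fun p _ => hEδ (p, p)
  have key : ∀ p q : Fin n, E (p, p) ⊗ₖ E (p, p) * (E (q, q) ⊗ₖ E (q, q)) =
      if p = q then E (p, p) ⊗ₖ E (p, p) else 0 := by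
    intro p q
    rw [← Matrix.mul_kronecker_mul, hmul]
    split_ifs with h
    · subst h; simp
    · simp
  rw [hδ1, Finset.sum_mul_sum]
  simp only [key]
  simp
end
end

section
/- Fix n ≥ 1, let (α i)_{i : Fin (n*n)} be an orthonormal basis of Mₙ(ℂ) for the Hilbert–Schmidt inner product, let δ : Mₙ(ℂ) → M_{n·n}(ℂ) be the unique linear map with δ(α i) = (α i) ⊗ₖ (α i), with Hilbert–Schmidt adjoint δ†; assume δ is completely positive. If the operator norm of δ†(1) is at most 1 (i.e. ‖δ†(1) x‖ ≤ ‖x‖ for all x ∈ ℂⁿ with the ℓ² norm), then δ†(1) = 1, the identity matrix of Mₙ(ℂ). -/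
open Matrix Kronecker ComplexOrder

noncomputable section

namespace Stmt18Aux

variable {m q : Type*} [Fintype m] [Fintype q]

lemma hs_expand (a b : Matrix m m ℂ) :
    hsInner a b = ∑ j, ∑ i, (starRingEnd ℂ) (a i j) * b i j := by
  simp [hsInner, Matrix.trace, Matrix.mul_apply, Matrix.diag, Matrix.conjTranspose_apply]

lemma hs_add_left (x y d : Matrix m m ℂ) :
    hsInner (x + y) d = hsInner x d + hsInner y d := by
  simp [hs_expand, add_mul, Finset.sum_add_distrib]

lemma hs_smul_left (c : ℂ) (x d : Matrix m m ℂ) :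
    hsInner (c • x) d = (starRingEnd ℂ) c * hsInner x d := by
  simp [hs_expand, Finset.mul_sum, mul_assoc]

lemma hs_zero_left (d : Matrix m m ℂ) : hsInner 0 d = 0 := by
  simp [hs_expand]

lemma hs_sub_right (a x y : Matrix m m ℂ) :
    hsInner a (x - y) = hsInner a x - hsInner a y := by
  simp [hs_expand, mul_sub, Finset.sum_sub_distrib]

lemma hs_sum_left {ι : Type*} (s : Finset ι) (f : ι → Matrix m m ℂ) (d : Matrix m m ℂ) :
    hsInner (∑ i ∈ s, f i) d = ∑ i ∈ s, hsInner (f i) d := by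
  classical
  induction s using Finset.induction with
  | empty => simp [hs_zero_left]
  | insert _ _ h ih => rw [Finset.sum_insert h, Finset.sum_insert h, hs_add_left, ih]

lemma hs_self_zero (d : Matrix m m ℂ) (h : hsInner d d = 0) : d = 0 := by
  have h2 : ∑ j, ∑ i, Complex.normSq (d i j) = 0 := by
    have : ((∑ j, ∑ i, Complex.normSq (d i j) : ℝ) : ℂ) = 0 := by
      rw [← h, hs_expand]
      simp [Complex.normSq_eq_conj_mul_self]
    exact_mod_cast this
  ext i j
  have h3 := (Finset.sum_eq_zero_iff_of_nonneg
    (fun _ _ => Finset.sum_nonneg fun _ _ => Complex.normSq_nonneg _)).mp h2 j (Finset.mem_univ _)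
  have h4 := (Finset.sum_eq_zero_iff_of_nonneg
    (fun _ _ => Complex.normSq_nonneg _)).mp h3 i (Finset.mem_univ _)
  simpa using Complex.normSq_eq_zero.mp h4

lemma hs_kron (a b c d : Matrix m m ℂ) :
    hsInner (a ⊗ₖ b) (c ⊗ₖ d) = hsInner a c * hsInner b d := by
  show (((a ⊗ₖ b)ᴴ) * (c ⊗ₖ d)).trace = (aᴴ * c).trace * ((bᴴ * d).trace)
  simp only [Matrix.trace, Matrix.diag, Matrix.mul_apply, Matrix.conjTranspose_apply,
    Matrix.kroneckerMap_apply, Fintype.sum_prod_type, star_mul']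
  calc ∑ x : m, ∑ x1 : m, ∑ x2 : m, ∑ x3 : m,
        star (a x2 x) * star (b x3 x1) * (c x2 x * d x3 x1)
      = ∑ x : m, ∑ x1 : m,
          (∑ x2 : m, star (a x2 x) * c x2 x) * (∑ x3 : m, star (b x3 x1) * d x3 x1) := by
        refine Finset.sum_congr rfl fun x _ => Finset.sum_congr rfl fun x1 _ => ?_
        rw [Finset.sum_mul_sum]
        exact Finset.sum_congr rfl fun p _ => Finset.sum_congr rfl fun q _ => by ring
    _ = _ := by rw [← Finset.sum_mul_sum]

/-- Cauchy–Schwarz for finite sums of complex numbers. -/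
lemma cs_sum {ι : Type*} [Fintype ι] (u v : ι → ℂ) :
    Complex.normSq (∑ x, (starRingEnd ℂ) (u x) * v x) ≤
      (∑ x, Complex.normSq (u x)) * (∑ x, Complex.normSq (v x)) := by
  let U : EuclideanSpace ℂ ι := WithLp.toLp 2 u
  let V : EuclideanSpace ℂ ι := WithLp.toLp 2 v
  have h := norm_inner_le_norm (𝕜 := ℂ) U V
  have hi : (inner ℂ U V : ℂ) = ∑ x, (starRingEnd ℂ) (u x) * v x := by
    simp [U, V, PiLp.inner_apply, mul_comm]
  have hU : ‖U‖ ^ 2 = ∑ x, Complex.normSq (u x) := by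
    rw [EuclideanSpace.norm_eq, Real.sq_sqrt (by positivity)]
    simp [U, Complex.normSq_eq_norm_sq]
  have hV : ‖V‖ ^ 2 = ∑ x, Complex.normSq (v x) := by
    rw [EuclideanSpace.norm_eq, Real.sq_sqrt (by positivity)]
    simp [V, Complex.normSq_eq_norm_sq]
  calc Complex.normSq (∑ x, (starRingEnd ℂ) (u x) * v x)
      = ‖(inner ℂ U V : ℂ)‖ ^ 2 := by rw [hi, Complex.normSq_eq_norm_sq]
    _ ≤ (‖U‖ * ‖V‖) ^ 2 := by apply pow_le_pow_left₀ (norm_nonneg _) h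
    _ = ‖U‖ ^ 2 * ‖V‖ ^ 2 := by ring
    _ = _ := by rw [hU, hV]

lemma std_sandwich [DecidableEq m] (W : Matrix q m ℂ) (i j : m) (x y : q) :
    (W * Matrix.single i j (1:ℂ) * Wᴴ) x y = W x i * (starRingEnd ℂ) (W y j) := by
  simp [Matrix.mul_apply, Matrix.single, Matrix.conjTranspose_apply, ite_and,
    Finset.sum_ite_eq, Finset.mul_sum, mul_ite]

end Stmt18Aux

open Stmt18Aux

/-- If δ is completely positive and δ†(1) has ℓ²-operator norm at most 1, then
δ†(1) is the identity matrix. -/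
theorem stmt_18 (n : ℕ) (hn : 1 ≤ n)
    (α : Fin (n * n) → Matrix (Fin n) (Fin n) ℂ)
    (horth : ∀ i j, hsInner (α i) (α j) = if i = j then 1 else 0)
    (hspan : Submodule.span ℂ (Set.range α) = ⊤)
    (δ : Matrix (Fin n) (Fin n) ℂ →ₗ[ℂ] Matrix (Fin n × Fin n) (Fin n × Fin n) ℂ)
    (hδ : ∀ i, δ (α i) = α i ⊗ₖ α i)
    (δd : Matrix (Fin n × Fin n) (Fin n × Fin n) ℂ →ₗ[ℂ] Matrix (Fin n) (Fin n) ℂ)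
    (hadj : ∀ a b, hsInner (δ a) b = hsInner a (δd b))
    (hCP : IsCompletelyPositive δ)
    (hnorm : ∀ x : Fin n → ℂ,
      ∑ i, Complex.normSq ((δd 1).mulVec x i) ≤ ∑ i, Complex.normSq (x i)) :
    δd 1 = 1 := by
  classical
  -- nondegeneracy against the spanning family
  have horthzero : ∀ w : Matrix (Fin n) (Fin n) ℂ,
      (∀ j, hsInner (α j) w = 0) → w = 0 := by
    intro w hw
    have hall : ∀ x : Matrix (Fin n) (Fin n) ℂ, hsInner x w = 0 := by
      intro x
      have hx : x ∈ Submodule.span ℂ (Set.range α) := by rw [hspan]; trivial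
      induction hx using Submodule.span_induction with
      | mem _ h => obtain ⟨j, rfl⟩ := h; exact hw j
      | zero => exact hs_zero_left w
      | add _ _ _ _ h1 h2 => rw [hs_add_left, h1, h2, add_zero]
      | smul c _ _ h1 => rw [hs_smul_left, h1, mul_zero]
    exact hs_self_zero w (hall w)
  -- the isometry property δ† ∘ δ = id
  have hiso : ∀ z, δd (δ z) = z := by
    have hbase : ∀ i, δd (δ (α i)) = α i := by
      intro i
      have hw : ∀ j, hsInner (α j) (δd (δ (α i)) - α i) = 0 := by
        intro j
        rw [hs_sub_right, ← hadj, hδ i, hδ j, hs_kron, horth]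
        by_cases h : j = i <;> simp [h]
      have := horthzero _ hw
      exact sub_eq_zero.mp this
    intro z
    have hz : z ∈ Submodule.span ℂ (Set.range α) := by rw [hspan]; trivial
    induction hz using Submodule.span_induction with
    | mem _ h => obtain ⟨j, rfl⟩ := h; exact hbase j
    | zero => simp
    | add x y _ _ h1 h2 => rw [map_add, map_add, h1, h2]
    | smul c x _ h1 => rw [LinearMap.map_smul, LinearMap.map_smul, h1]
  -- Kraus decomposition from complete positivity
  set M : Matrix (Fin n × Fin n) (Fin n × Fin n) ℂ :=
    Matrix.of (fun r r' => (if r.1 = r.2 then (1:ℂ) else 0) * (if r'.1 = r'.2 then 1 else 0))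
    with hM
  have hMps : M.PosSemidef := by
    rw [Matrix.posSemidef_iff_dotProduct_mulVec]
    constructor
    · ext r r'
      simp only [Matrix.conjTranspose_apply, hM, Matrix.of_apply, star_mul',
        apply_ite (star : ℂ → ℂ), star_one, star_zero]
      ring
    · intro x
      set z : ℂ := ∑ r', (if r'.1 = r'.2 then (1:ℂ) else 0) * x r' with hz
      have hmv : M *ᵥ x = fun r => (if r.1 = r.2 then (1:ℂ) else 0) * z := by
        funext r
        simp only [Matrix.mulVec, dotProduct, hM, Matrix.of_apply, hz, Finset.mul_sum]
        exact Finset.sum_congr rfl fun r' _ => by ring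
      have hq : dotProduct (star x) (M *ᵥ x) = star z * z := by
        rw [hmv]
        simp only [dotProduct, Pi.star_apply]
        have hsz : star z = ∑ r, star (x r) * (if r.1 = r.2 then (1:ℂ) else 0) := by
          rw [hz, star_sum]
          exact Finset.sum_congr rfl fun r _ => by
            simp [star_mul', apply_ite (star : ℂ → ℂ)]
        rw [hsz, Finset.sum_mul]
        exact Finset.sum_congr rfl fun r _ => by ring
      rw [hq]
      exact star_mul_self_nonneg z
  obtain ⟨B, hB⟩ : ∃ B : Matrix (Fin n × (Fin n × Fin n)) (Fin n × (Fin n × Fin n)) ℂ,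
      amplify δ n M = Bᴴ * B := by
    open scoped MatrixOrder in exact CStarAlgebra.nonneg_iff_eq_star_mul_self.mp (hCP n M hMps).nonneg
  set V : (Fin n × (Fin n × Fin n)) → Matrix (Fin n × Fin n) (Fin n) ℂ :=
    fun s => Matrix.of fun x i => (starRingEnd ℂ) (B s (i, x)) with hV
  -- δ is given by the Kraus operators V
  set L : Matrix (Fin n) (Fin n) ℂ →ₗ[ℂ] Matrix (Fin n × Fin n) (Fin n × Fin n) ℂ :=
    { toFun := fun z => ∑ s, V s * z * (V s)ᴴ
      map_add' := fun x y => by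
        simp [Matrix.mul_add, Matrix.add_mul, Finset.sum_add_distrib]
      map_smul' := fun c x => by
        simp [Matrix.mul_smul, Matrix.smul_mul, Finset.smul_sum] } with hL
  have hδL : δ = L := by
    apply Module.Basis.ext (Matrix.stdBasis ℂ (Fin n) (Fin n))
    rintro ⟨i, j⟩
    rw [Matrix.stdBasis_eq_single]
    have hblock : (Matrix.of fun a b => M (i, a) (j, b)) = Matrix.single i j (1:ℂ) := by
      ext a b
      simp only [Matrix.of_apply, hM, Matrix.single, ite_and]
      split_ifs <;> simp_all
    ext x y
    have hBxy : δ (Matrix.single i j (1:ℂ)) x y = (Bᴴ * B) (i,x) (j,y) := by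
      rw [← hblock, ← hB]
      rfl
    rw [hBxy]
    simp only [hL, LinearMap.coe_mk, AddHom.coe_mk, Matrix.sum_apply]
    rw [show (Bᴴ * B) (i,x) (j,y) = ∑ s, (starRingEnd ℂ) (B s (i,x)) * B s (j,y) by
      simp [Matrix.mul_apply, Matrix.conjTranspose_apply]]
    refine Finset.sum_congr rfl fun s _ => ?_
    rw [std_sandwich]
    simp [hV, Matrix.of_apply, Complex.conj_conj]
  -- δ† is given by the adjoint Kraus operators
  set D : Matrix (Fin n × Fin n) (Fin n × Fin n) ℂ →ₗ[ℂ] Matrix (Fin n) (Fin n) ℂ :=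
    { toFun := fun Y => ∑ s, (V s)ᴴ * Y * V s
      map_add' := fun x y => by
        simp [Matrix.mul_add, Matrix.add_mul, Finset.sum_add_distrib]
      map_smul' := fun c x => by
        simp [Matrix.mul_smul, Matrix.smul_mul, Finset.smul_sum] } with hD
  have hδdD : ∀ Y, δd Y = D Y := by
    intro Y
    have hkey : ∀ a, hsInner a (δd Y) = hsInner a (D Y) := by
      intro a
      rw [← hadj]
      rw [hδL]
      show hsInner (∑ s, V s * a * (V s)ᴴ) Y = hsInner a (∑ s, (V s)ᴴ * Y * V s)
      rw [hs_sum_left]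
      unfold hsInner
      rw [Matrix.mul_sum, Matrix.trace_sum]
      refine Finset.sum_congr rfl fun s _ => ?_
      rw [Matrix.conjTranspose_mul, Matrix.conjTranspose_mul, Matrix.conjTranspose_conjTranspose,
        Matrix.trace_mul_comm, ← Matrix.mul_assoc, Matrix.trace_mul_comm]
      simp only [Matrix.mul_assoc]
    have := horthzero (δd Y - D Y) ?_
    · exact sub_eq_zero.mp this
    · intro j
      rw [hs_sub_right, hkey, sub_self]
  -- column sums of squares of Kraus operators
  set d : Fin n → (Fin n × (Fin n × Fin n)) → ℝ :=
    fun a s => ∑ x, Complex.normSq (V s x a) with hd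
  have hdiag : ∀ a, (δd 1) a a = ((∑ s, d a s : ℝ) : ℂ) := by
    intro a
    rw [hδdD]
    simp only [hD, LinearMap.coe_mk, AddHom.coe_mk, Matrix.mul_one]
    rw [Matrix.sum_apply]
    push_cast
    refine Finset.sum_congr rfl fun s _ => ?_
    simp only [Matrix.mul_apply, Matrix.conjTranspose_apply, hd]
    push_cast
    exact Finset.sum_congr rfl fun x _ => (Complex.normSq_eq_conj_mul_self).symm ▸ rfl
  have hone : ∀ a : Fin n, 1 ≤ ∑ s, d a s := by
    intro a
    have h0 : δd (δ (Matrix.single a a (1:ℂ))) = Matrix.single a a 1 := hiso _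
    rw [hδL, hδdD] at h0
    have h1 : D (L (Matrix.single a a (1:ℂ))) =
        ∑ t, ∑ s, ((V t)ᴴ * V s) * Matrix.single a a 1 * ((V t)ᴴ * V s)ᴴ := by
      simp only [hD, hL, LinearMap.coe_mk, AddHom.coe_mk, Matrix.mul_sum, Matrix.sum_mul]
      refine Finset.sum_congr rfl fun t _ => Finset.sum_congr rfl fun s _ => ?_
      rw [Matrix.conjTranspose_mul, Matrix.conjTranspose_conjTranspose]
      simp only [Matrix.mul_assoc]
    have h3 : (1:ℂ) = ∑ t, ∑ s,
        ((Complex.normSq (((V t)ᴴ * V s) a a) : ℝ) : ℂ) := by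
      conv_lhs => rw [show (1:ℂ) = Matrix.single a a (1:ℂ) a a from
        (Matrix.single_apply_same a a 1).symm, ← h0, h1]
      rw [Matrix.sum_apply]
      refine Finset.sum_congr rfl fun t _ => ?_
      rw [Matrix.sum_apply]
      refine Finset.sum_congr rfl fun s _ => ?_
      rw [std_sandwich, Complex.mul_conj]
    have h2 : (1:ℝ) = ∑ t, ∑ s, Complex.normSq (((V t)ᴴ * V s) a a) := by
      exact_mod_cast h3
    have h4 : ∀ t s, Complex.normSq (((V t)ᴴ * V s) a a) ≤ d a t * d a s := by
      intro t s
      have hts : ((V t)ᴴ * V s) a a = ∑ x, (starRingEnd ℂ) (V t x a) * (V s x a) := by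
        simp [Matrix.mul_apply, Matrix.conjTranspose_apply]
      rw [hts, hd]
      exact cs_sum _ _
    have h5 : (1:ℝ) ≤ (∑ s, d a s) * (∑ s, d a s) := by
      rw [Finset.sum_mul_sum]
      calc (1:ℝ) = _ := h2
        _ ≤ _ := Finset.sum_le_sum fun t _ => Finset.sum_le_sum fun s _ => h4 t s
    have h6 : 0 ≤ ∑ s, d a s :=
      Finset.sum_nonneg fun s _ => Finset.sum_nonneg fun x _ => Complex.normSq_nonneg _
    by_contra hlt
    push_neg at hlt
    have hlt2 : (∑ s, d a s) * (∑ s, d a s) < 1 :=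
      calc (∑ s, d a s) * (∑ s, d a s) ≤ 1 * (∑ s, d a s) :=
            mul_le_mul_of_nonneg_right hlt.le h6
        _ = (∑ s, d a s) := one_mul _
        _ < 1 := hlt
    linarith
  -- conclude columnwise using the operator norm bound
  have hcol : ∀ a i, (δd 1) i a = if i = a then 1 else 0 := by
    intro a
    have hx := hnorm (fun i => if i = a then (1:ℂ) else 0)
    have hmv : ∀ i, ((δd 1) *ᵥ fun i => if i = a then (1:ℂ) else 0) i = (δd 1) i a := by
      intro i
      simp [Matrix.mulVec, dotProduct, mul_ite, Finset.sum_ite_eq']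
    have hrhs : ∑ i, Complex.normSq (if i = a then (1:ℂ) else 0) = 1 := by
      simp [apply_ite Complex.normSq, Finset.sum_ite_eq']
    rw [hrhs] at hx
    simp only [hmv] at hx
    have hsplit := Finset.add_sum_erase Finset.univ
      (fun i => Complex.normSq ((δd 1) i a)) (Finset.mem_univ a)
    have hSnn : 0 ≤ ∑ s, d a s :=
      Finset.sum_nonneg fun s _ => Finset.sum_nonneg fun x _ => Complex.normSq_nonneg _
    have hSaa : Complex.normSq ((δd 1) a a) = (∑ s, d a s) * (∑ s, d a s) := by
      rw [hdiag a, Complex.normSq_ofReal]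
    have hS1 : 1 ≤ ∑ s, d a s := hone a
    have hSS : 1 ≤ (∑ s, d a s) * (∑ s, d a s) :=
      one_mul (1:ℝ) ▸ mul_le_mul hS1 hS1 zero_le_one hSnn
    have hrest : ∑ i ∈ Finset.univ.erase a, Complex.normSq ((δd 1) i a) ≤ 0 := by
      rw [← hsplit] at hx
      rw [hSaa] at hx
      linarith
    have hrest0 : ∀ i ∈ Finset.univ.erase a, Complex.normSq ((δd 1) i a) = 0 := by
      intro i hi
      have hnn : ∀ i ∈ Finset.univ.erase a, 0 ≤ Complex.normSq ((δd 1) i a) :=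
        fun _ _ => Complex.normSq_nonneg _
      exact (Finset.sum_eq_zero_iff_of_nonneg hnn).mp
        (le_antisymm hrest (Finset.sum_nonneg hnn)) i hi
    intro i
    by_cases hia : i = a
    · rw [hia, if_pos rfl]
      have hrnn : 0 ≤ ∑ i ∈ Finset.univ.erase a, Complex.normSq ((δd 1) i a) :=
        Finset.sum_nonneg fun _ _ => Complex.normSq_nonneg _
      have hSle : (∑ s, d a s) * (∑ s, d a s) ≤ 1 := by
        rw [← hsplit] at hx
        rw [hSaa] at hx
        linarith
      have hSub : (∑ s, d a s) ≤ 1 := by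
        have : (∑ s, d a s) * 1 ≤ (∑ s, d a s) * (∑ s, d a s) :=
          mul_le_mul_of_nonneg_left hS1 hSnn
        rw [mul_one] at this
        linarith
      have hS : (∑ s, d a s) = 1 := le_antisymm hSub hS1
      rw [hdiag a, hS]
      simp
    · have := Complex.normSq_eq_zero.mp
        (hrest0 i (Finset.mem_erase.mpr ⟨hia, Finset.mem_univ i⟩))
      rw [this, if_neg hia]
  ext i j
  rw [hcol j i, Matrix.one_apply]
end
end
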